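/- arXiv:1707.05762 — 3 statements merged into one kernel-verified Lean document; each statement's English description precedes it below -/
import Mathlib

section
/- There exists a continuous map f:[0,1]→[0,1] such that, with d the Euclidean metric on [0,1], the upper metric mean dimension satisfies mdim([0,1],d,f) = 1. -/
open Filter Set Metric Function
open scoped ENNReal NNReal

noncomputable section

universe u

/-- A pair `(X̂, Y)` of random variables on a probability space `(Ω, P)` satisfying
condition `(*)_{n,ε,μ}`: `X̂` has law `μ` and the expected average distortion
`E[(1/n) ∑_{k<n} d(T^k X̂, Y_k)]` is at most `ε`. -/
structure DistortionPair {X : Type u} [MetricSpace X] [MeasurableSpace X]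
    (T : X → X) (μ : MeasureTheory.Measure X) (ε : ℝ) (n : ℕ) where
  Ω : Type u
  [mΩ : MeasurableSpace Ω]
  P : MeasureTheory.Measure Ω
  probP : MeasureTheory.IsProbabilityMeasure P
  Xh : Ω → X
  Y : Ω → Fin n → X
  measXh : Measurable Xh
  measY : Measurable Y
  law : MeasureTheory.Measure.map Xh P = μ
  distortion : ∫ ω, (∑ k : Fin n, dist (T^[(k : ℕ)] (Xh ω)) (Y ω k)) / n ∂P ≤ ε

open MeasureTheory

section Defs

variable {X : Type u} [MetricSpace X]

/-- The Bowen dynamical distance `d_n(x,y) = max_{0 ≤ k ≤ n-1} d(T^k x, T^k y)`. -/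
def dynDist (T : X → X) (n : ℕ) (x y : X) : ℝ :=
  (((Finset.range n).sup (fun k => nndist (T^[k] x) (T^[k] y)) : ℝ≥0) : ℝ)

/-- The `(n,ε)`-dynamical ball around `x`. -/
def dynBall (T : X → X) (n : ℕ) (x : X) (ε : ℝ) : Set X :=
  {y | dynDist T n x y < ε}

/-- `N_d(n,ε)`: the maximal cardinality of an `(n,ε)`-separated subset of `X`. -/
def dynSepNum (T : X → X) (n : ℕ) (ε : ℝ) : ℕ :=
  sSup {m | ∃ E : Finset X, (∀ x ∈ E, ∀ y ∈ E, x ≠ y → ε < dynDist T n x y) ∧ E.card = m}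

/-- `S(X,d,ε) = limsup_n (1/n) log N_d(n,ε)`. -/
def dynS (T : X → X) (ε : ℝ) : ℝ≥0∞ :=
  Filter.atTop.limsup fun n : ℕ =>
    ENNReal.ofReal (Real.log (dynSepNum T n ε)) / (n : ℝ≥0∞)

/-- The upper metric mean dimension `mdim(X,d,T) = limsup_{ε → 0⁺} S(X,d,ε)/|log ε|`. -/
def mdim (T : X → X) : ℝ≥0∞ :=
  Filter.limsup (fun ε : ℝ => dynS T ε / ENNReal.ofReal |Real.log ε|)
    (nhdsWithin 0 (Set.Ioi 0))

/-- The topological entropy `h_top(X,T) = lim_{ε → 0⁺} S(X,d,ε)`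
(the limit exists by monotonicity, hence equals the `limsup`). -/
def htop (T : X → X) : ℝ≥0∞ :=
  Filter.limsup (fun ε : ℝ => dynS T ε) (nhdsWithin 0 (Set.Ioi 0))

/-- `N_μ(n,ε,δ)`: the minimal number of `(n,ε)`-dynamical balls needed to cover a set of
`μ`-measure strictly bigger than `1 - δ`. -/
def dynCovNum [MeasurableSpace X] (T : X → X) (μ : Measure X) (n : ℕ) (ε δ : ℝ) : ℕ :=
  sInf {m | ∃ F : Finset X, F.card = m ∧
    ENNReal.ofReal (1 - δ) < μ (⋃ x ∈ F, dynBall T n x ε)}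

/-- `h_μ(ε,T,δ) = limsup_n (1/n) log N_μ(n,ε,δ)`. -/
def dynH [MeasurableSpace X] (T : X → X) (μ : Measure X) (ε δ : ℝ) : ℝ≥0∞ :=
  Filter.atTop.limsup fun n : ℕ =>
    ENNReal.ofReal (Real.log (dynCovNum T μ n ε δ)) / (n : ℝ≥0∞)

/-- The average dynamical distance `d̃_n(x,y) = (1/n) ∑_{k<n} d(T^k x, T^k y)`. -/
def avgDist (T : X → X) (n : ℕ) (x y : X) : ℝ :=
  (∑ k ∈ Finset.range n, dist (T^[k] x) (T^[k] y)) / n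

/-- The `(n,ε)`-average dynamical ball around `x`. -/
def avgBall (T : X → X) (n : ℕ) (x : X) (ε : ℝ) : Set X :=
  {y | avgDist T n x y < ε}

/-- `Ñ_d(n,ε)`: the maximal cardinality of an `(n,ε)`-average separated subset of `X`. -/
def avgSepNum (T : X → X) (n : ℕ) (ε : ℝ) : ℕ :=
  sSup {m | ∃ E : Finset X, (∀ x ∈ E, ∀ y ∈ E, x ≠ y → ε < avgDist T n x y) ∧ E.card = m}

/-- `S̃(X,d,ε) = limsup_n (1/n) log Ñ_d(n,ε)`. -/
def avgS (T : X → X) (ε : ℝ) : ℝ≥0∞ :=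
  Filter.atTop.limsup fun n : ℕ =>
    ENNReal.ofReal (Real.log (avgSepNum T n ε)) / (n : ℝ≥0∞)

/-- `Ñ_μ(n,ε,δ)`: the minimal number of `(n,ε)`-average dynamical balls needed to cover a set
of `μ`-measure strictly bigger than `1 - δ`. -/
def avgCovNum [MeasurableSpace X] (T : X → X) (μ : Measure X) (n : ℕ) (ε δ : ℝ) : ℕ :=
  sInf {m | ∃ F : Finset X, F.card = m ∧
    ENNReal.ofReal (1 - δ) < μ (⋃ x ∈ F, avgBall T n x ε)}

/-- `h̃_μ(ε,T,δ) = limsup_n (1/n) log Ñ_μ(n,ε,δ)`. -/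
def avgH [MeasurableSpace X] (T : X → X) (μ : Measure X) (ε δ : ℝ) : ℝ≥0∞ :=
  Filter.atTop.limsup fun n : ℕ =>
    ENNReal.ofReal (Real.log (avgCovNum T μ n ε δ)) / (n : ℝ≥0∞)

/-- `h̃_μ(T,δ) = lim_{ε → 0⁺} h̃_μ(ε,T,δ)` (the limit exists by monotonicity, hence equals
the `limsup`). -/
def avgHlim [MeasurableSpace X] (T : X → X) (μ : Measure X) (δ : ℝ) : ℝ≥0∞ :=
  Filter.limsup (fun ε : ℝ => avgH T μ ε δ) (nhdsWithin 0 (Set.Ioi 0))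

end Defs

/-- `N(ε)`: the maximal cardinality of an `ε`-separated subset of `Y`. -/
def sepNum (Y : Type*) [MetricSpace Y] (ε : ℝ) : ℕ :=
  sSup {m | ∃ E : Finset Y, (∀ x ∈ E, ∀ y ∈ E, x ≠ y → ε < dist x y) ∧ E.card = m}

/-- The upper box (Minkowski) dimension `limsup_{ε → 0⁺} log N(ε) / |log ε|`. -/
def upperBoxDim (Y : Type*) [MetricSpace Y] : ℝ≥0∞ :=
  Filter.limsup
    (fun ε : ℝ => ENNReal.ofReal (Real.log (sepNum Y ε)) / ENNReal.ofReal |Real.log ε|)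
    (nhdsWithin 0 (Set.Ioi 0))

section Entropy

variable {X : Type u} [MeasurableSpace X]

/-- The entropy contribution `-μ(A) log μ(A)` of one cell (nonnegative when `μ(A) ≤ 1`). -/
def cellEnt (μ : Measure X) (A : Set X) : ℝ≥0∞ :=
  ENNReal.ofReal (-((μ A).toReal * Real.log (μ A).toReal))

/-- `H_μ(P ∨ T⁻¹P ∨ ⋯ ∨ T^{-(n-1)}P)` for the finite partition `P` indexed by `Fin m`. -/
def refinedEnt (μ : Measure X) (T : X → X) {m : ℕ} (P : Fin m → Set X) (n : ℕ) : ℝ≥0∞ :=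
  ∑ s : Fin n → Fin m, cellEnt μ (⋂ k : Fin n, T^[(k : ℕ)] ⁻¹' P (s k))

/-- `h_μ(P,T) = inf_{n ≥ 1} (1/n) H_μ(Pⁿ)`. -/
def entPart (μ : Measure X) (T : X → X) {m : ℕ} (P : Fin m → Set X) : ℝ≥0∞ :=
  ⨅ n : ℕ, refinedEnt μ T P (n + 1) / ((n + 1 : ℕ) : ℝ≥0∞)

/-- The measure-theoretic (Kolmogorov–Sinai) entropy `h_μ(T) = sup_P h_μ(P,T)`, the supremum
over all finite measurable partitions of `X`. -/
def KSentropy (μ : Measure X) (T : X → X) : ℝ≥0∞ :=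
  ⨆ (m : ℕ) (P : Fin m → Set X) (_ : ∀ i, MeasurableSet (P i))
    (_ : Pairwise (Function.onFun Disjoint P)) (_ : (⋃ i, P i) = Set.univ),
    entPart μ T P

end Entropy

section RD

open scoped Classical in
/-- The Kullback–Leibler divergence `∫ log (dp/dq) dp` (with value `∞` if `p` is not
absolutely continuous w.r.t. `q` or the integrand is not integrable). -/
def klDiv {α : Type*} [MeasurableSpace α] (p q : Measure α) : ℝ≥0∞ :=
  if p ≪ q ∧ Integrable (fun x => Real.log (p.rnDeriv q x).toReal) p
  then ENNReal.ofReal (∫ x, Real.log (p.rnDeriv q x).toReal ∂p)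
  else ⊤

/-- The mutual information `I(U,V)`: the Kullback–Leibler divergence of the joint law of
`(U,V)` with respect to the product of the laws of `U` and `V`. -/
def mutualInfo {Ω α β : Type*} [MeasurableSpace Ω] [MeasurableSpace α] [MeasurableSpace β]
    (P : Measure Ω) (U : Ω → α) (V : Ω → β) : ℝ≥0∞ :=
  klDiv (Measure.map (fun ω => (U ω, V ω)) P)
    ((Measure.map U P).prod (Measure.map V P))

/-- The rate distortion function `R_μ(ε) = inf (1/n) I(X̂,Y)`, the infimum over all `n ≥ 1`
and all pairs `(X̂,Y)` satisfying condition `(*)_{n,ε,μ}`. -/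
def rateDistortion {X : Type u} [MetricSpace X] [MeasurableSpace X]
    (T : X → X) (μ : Measure X) (ε : ℝ) : ℝ≥0∞ :=
  ⨅ (n : ℕ) (_ : 0 < n) (pair : DistortionPair T μ ε n),
    @mutualInfo pair.Ω X (Fin n → X) pair.mΩ _ _ pair.P pair.Xh pair.Y / (n : ℝ≥0∞)

end RD

end

namespace Prop53

noncomputable section

/-- set of even integers -/
def E2 : Set ℝ := Set.range (fun i : ℤ => 2*(i:ℝ))

lemma E2_nonempty : E2.Nonempty := ⟨0, ⟨0, by simp⟩⟩

/-- triangle wave: distance to nearest even integer -/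
noncomputable def w (t : ℝ) : ℝ := infDist t E2

lemma w_cont : Continuous w := Metric.continuous_infDist_pt E2

lemma w_nonneg (t : ℝ) : 0 ≤ w t := infDist_nonneg

lemma w_le_one (t : ℝ) : w t ≤ 1 := by
  have h := abs_sub_round (t/2)
  have hm : (2:ℝ) * round (t/2) ∈ E2 := ⟨round (t/2), rfl⟩
  have := infDist_le_dist_of_mem (x := t) hm
  refine this.trans ?_
  rw [Real.dist_eq]
  have : |t - 2 * round (t/2)| = 2 * |t/2 - round (t/2)| := by
    rw [show (2:ℝ) * |t/2 - round (t/2)| = |2| * |t/2 - round (t/2)| by norm_num,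
      ← abs_mul]
    congr 1; ring
  rw [this]; linarith

lemma w_eval (i : ℤ) (y : ℝ) (h0 : 0 ≤ y) (h1 : y ≤ 1) : w (2*i + y) = y := by
  refine le_antisymm ?_ ?_
  · have hm : (2:ℝ)*(i:ℝ) ∈ E2 := ⟨i, rfl⟩
    have := infDist_le_dist_of_mem (x := 2*i + y) hm
    simpa [w, Real.dist_eq, abs_of_nonneg h0] using this
  · by_contra h
    push_neg at h
    obtain ⟨z, hz, hd⟩ := (infDist_lt_iff E2_nonempty).mp h
    obtain ⟨j, rfl⟩ := hz
    rw [Real.dist_eq] at hd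
    have h2 : |2*(i:ℝ) + y - 2*j| = |2*((i:ℝ)-j) + y| := by ring_nf
    rw [h2] at hd
    rcases le_or_gt j i with hj | hj
    · have : (0:ℝ) ≤ 2*((i:ℝ)-j) := by
        have : (0:ℝ) ≤ (i:ℝ) - j := by exact_mod_cast sub_nonneg.mpr hj
        linarith
      have : y ≤ 2*((i:ℝ)-j) + y := by linarith
      rw [abs_of_nonneg (by linarith)] at hd; linarith
    · have hji' : i - j ≤ -1 := by omega
      have hji : (i:ℝ) - j ≤ -1 := by exact_mod_cast hji'
      have : 2*((i:ℝ)-j) + y ≤ -2 + y := by linarith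
      rw [abs_of_nonpos (by linarith)] at hd
      linarith

lemma w_zero : w 0 = 0 := by simpa using w_eval 0 0 le_rfl zero_le_one

lemma w_nat (n : ℕ) (y : ℝ) (h0 : 0 ≤ y) (h1 : y ≤ 1) : w (2*n + y) = y := by
  simpa using w_eval n y h0 h1

/-- number of letters in the alphabet at stage m -/
def R (m : ℕ) : ℕ := 2^(2^m - 1)
/-- number of branches of the sawtooth at stage m (odd) -/
def k (m : ℕ) : ℕ := 2 * R m + 1

lemma R_pos (m : ℕ) : 0 < R m := Nat.pow_pos (by norm_num)
lemma k_pos (m : ℕ) : 0 < k m := by unfold k; omega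
lemma k_ge3 (m : ℕ) : 3 ≤ k m := by have := R_pos m; unfold k; omega

/-- left endpoint / length of the interval J m = [a m, 2 a m] -/
noncomputable def a (m : ℕ) : ℝ := (1/2)^(m+1)

lemma a_pos (m : ℕ) : 0 < a m := by unfold a; positivity
lemma two_a_le_one (m : ℕ) : 2 * a m ≤ 1 := by
  have : (1/2:ℝ)^(m+1) ≤ (1/2)^1 := by
    apply pow_le_pow_of_le_one (by norm_num) (by norm_num); omega
  simp only [a]; nlinarith

/-- the k m-branch sawtooth on [0,1] -/
noncomputable def T (m : ℕ) (y : ℝ) : ℝ := w (k m * y)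

lemma T_mem (m : ℕ) (y : ℝ) : T m y ∈ Icc (0:ℝ) 1 := ⟨w_nonneg _, w_le_one _⟩

lemma T_one (m : ℕ) : T m 1 = 1 := by
  have : ((k m : ℝ)) * 1 = 2 * (R m : ℝ) + 1 := by rw [k]; push_cast; ring
  rw [T, this, w_nat (R m) 1 zero_le_one le_rfl]

lemma T_zero (m : ℕ) : T m 0 = 0 := by simp [T, w_zero]

noncomputable def ψ (m : ℕ) (x : ℝ) : ℝ := a m * T m ((x - a m)/a m) - (x - a m)

noncomputable def φ (m : ℕ) (x : ℝ) : ℝ := ψ m (max (a m) (min x (2 * a m)))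

lemma ψ_cont (m : ℕ) : Continuous (ψ m) := by
  unfold ψ T
  have h1 : Continuous fun x : ℝ => (k m : ℝ) * ((x - a m)/a m) := by fun_prop
  exact (continuous_const.mul (w_cont.comp h1)).sub (by fun_prop)

lemma φ_cont (m : ℕ) : Continuous (φ m) := by
  unfold φ
  exact (ψ_cont m).comp (continuous_const.max (continuous_id.min continuous_const))

lemma ψ_left (m : ℕ) : ψ m (a m) = 0 := by simp [ψ, T_zero]

lemma ψ_right (m : ℕ) : ψ m (2 * a m) = 0 := by
  have h : (2 * a m - a m)/a m = 1 := by
    rw [show 2 * a m - a m = a m by ring, div_self (a_pos m).ne']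
  rw [ψ, h, T_one]; ring

lemma φ_eq_on (m : ℕ) (x : ℝ) (hx : x ∈ Icc (a m) (2 * a m)) : φ m x = ψ m x := by
  rw [φ, min_eq_left hx.2, max_eq_right hx.1]

lemma φ_bound (m : ℕ) (x : ℝ) : ‖φ m x‖ ≤ 2 * a m := by
  rw [φ]
  set y := max (a m) (min x (2 * a m)) with hy
  have h1 : a m ≤ y := le_max_left _ _
  have h2 : y ≤ 2 * a m := by
    apply max_le (by linarith [a_pos m]) (min_le_right _ _)
  rw [Real.norm_eq_abs, ψ, abs_sub_comm]
  have hT := T_mem m ((y - a m)/a m)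
  have hTl := hT.1; have hTu := hT.2
  have ha := a_pos m
  rw [abs_le]
  constructor <;> nlinarith

/-- the global map -/
noncomputable def F (x : ℝ) : ℝ := x + ∑' m, φ m x

lemma summable_two_a : Summable (fun m : ℕ => 2 * a m) := by
  have h : (fun m : ℕ => 2 * a m) = fun m : ℕ => (1/2:ℝ)^m := by
    funext m; rw [a, pow_succ]; ring
  rw [h]
  exact summable_geometric_of_lt_one (by norm_num) (by norm_num)

lemma F_cont : Continuous F := by
  apply continuous_id.add
  exact continuous_tsum φ_cont summable_two_a (fun m x => φ_bound m x)

lemma a_antitone {m m' : ℕ} (h : m ≤ m') : a m' ≤ a m := by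
  apply pow_le_pow_of_le_one (by norm_num) (by norm_num); omega

lemma two_a_succ (m : ℕ) : 2 * a (m+1) = a m := by
  rw [a, a, pow_succ]; ring

lemma two_a_pred (m : ℕ) (hm : 0 < m) : 2 * a m = a (m-1) := by
  have h : m - 1 + 1 = m := by omega
  rw [← h, two_a_succ, h]

lemma φ_vanish (m m' : ℕ) (hne : m' ≠ m) (x : ℝ) (hx : x ∈ Icc (a m) (2 * a m)) :
    φ m' x = 0 := by
  rcases lt_or_gt_of_ne hne with h | h
  · -- m' < m : x ≤ 2 a m = a (m-1) ≤ a m' ≤ 2 a m'... clamp = a m'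
    have hle : x ≤ a m' := by
      have h1 : 2 * a m = a (m-1) := two_a_pred m (by omega)
      have h2 : a (m-1) ≤ a m' := a_antitone (by omega)
      linarith [hx.2]
    have : max (a m') (min x (2 * a m')) = a m' := by
      rw [max_eq_left]
      exact le_trans (min_le_left _ _) hle
    rw [φ, this, ψ_left]
  · -- m' > m : 2 a m' = a (m'-1) ≤ a m ≤ x, clamp = 2 a m'
    have hge : 2 * a m' ≤ x := by
      have h1 : 2 * a m' = a (m'-1) := two_a_pred m' (by omega)
      have h2 : a (m'-1) ≤ a m := a_antitone (by omega)
      linarith [hx.1]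
    have : max (a m') (min x (2 * a m')) = 2 * a m' := by
      rw [min_eq_right hge, max_eq_right]
      linarith [a_pos m']
    rw [φ, this, ψ_right]

lemma F_on (m : ℕ) (x : ℝ) (hx : x ∈ Icc (a m) (2 * a m)) :
    F x = a m + a m * T m ((x - a m)/a m) := by
  rw [F, tsum_eq_single m (fun m' h => φ_vanish m m' h x hx), φ_eq_on m x hx, ψ]
  ring

lemma F_scaled (m : ℕ) (y : ℝ) (hy : y ∈ Icc (0:ℝ) 1) :
    F (a m + a m * y) = a m + a m * T m y := by
  have ha := a_pos m
  have hx : a m + a m * y ∈ Icc (a m) (2 * a m) := by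
    constructor <;> nlinarith [hy.1, hy.2]
  rw [F_on m _ hx]
  congr 2
  field_simp
  ring_nf

lemma exists_m (x : ℝ) (h0 : 0 < x) (h1 : x ≤ 1) : ∃ m, x ∈ Icc (a m) (2 * a m) := by
  have hex : ∃ m, (1/2:ℝ)^(m+1) ≤ x := by
    obtain ⟨m, hm⟩ := exists_pow_lt_of_lt_one h0 (by norm_num : (1/2:ℝ) < 1)
    refine ⟨m, ?_⟩
    have h1 : (1/2:ℝ)^(m+1) ≤ (1/2)^m := by
      apply pow_le_pow_of_le_one (by norm_num) (by norm_num); omega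
    linarith
  classical
  let m := Nat.find hex
  refine ⟨m, Nat.find_spec hex, ?_⟩
  rcases Nat.eq_zero_or_pos m with hm0 | hmp
  · have : 2 * a 0 = 1 := by norm_num [a]
    rw [hm0, this]; exact h1
  · have hnot := Nat.find_min hex (m := m - 1) (by omega)
    push_neg at hnot
    have h2 : x < a (m-1) := by rw [a]; exact hnot
    have h3 : a (m-1) = 2 * a m := (two_a_pred m hmp).symm
    linarith

lemma F_mem (x : ℝ) (hx : x ∈ Icc (0:ℝ) 1) : F x ∈ Icc (0:ℝ) 1 := by
  rcases eq_or_lt_of_le hx.1 with h0 | h0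
  · have : F 0 = 0 := by
      rw [F]
      have : ∀ m, φ m 0 = 0 := by
        intro m
        have : max (a m) (min 0 (2 * a m)) = a m := by
          rw [min_eq_left (by linarith [a_pos m]), max_eq_left (a_pos m).le]
        rw [φ, this, ψ_left]
      simp [this]
    rw [← h0, this]; exact ⟨le_rfl, zero_le_one⟩
  · obtain ⟨m, hm⟩ := exists_m x h0 hx.2
    rw [F_on m x hm]
    have hT := T_mem m ((x - a m)/a m)
    have ha := a_pos m
    have h2a := two_a_le_one m
    constructor <;> nlinarith [hT.1, hT.2]

lemma k_posR (m : ℕ) : 0 < (k m : ℝ) := by exact_mod_cast (by have := k_ge3 m; omega : 0 < k m)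

/-- the point coded by the word `s` at time `j` (letters used: `s j, ..., s (n-1)`) -/
noncomputable def z (m n : ℕ) (s : ℕ → ℕ) (j : ℕ) : ℝ :=
  ∑ t ∈ Finset.range (n - j), (2 * s (j + t) : ℝ) / (k m : ℝ)^(t+1)

lemma z_of_ge (m n : ℕ) (s : ℕ → ℕ) (j : ℕ) (h : n ≤ j) : z m n s j = 0 := by
  rw [z, Nat.sub_eq_zero_of_le h]; simp

lemma z_rec (m n : ℕ) (s : ℕ → ℕ) (j : ℕ) (h : j < n) :
    z m n s j = (2 * s j + z m n s (j+1)) / (k m : ℝ) := by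
  have hk := k_posR m
  have h1 : n - j = (n - (j+1)) + 1 := by omega
  rw [z, h1, Finset.sum_range_succ']
  have h2 : ∀ t, (2 * s (j + (t+1)) : ℝ) / (k m : ℝ)^(t+1+1)
      = ((2 * s (j+1+t) : ℝ) / (k m : ℝ)^(t+1)) / (k m : ℝ) := by
    intro t
    rw [div_div, ← pow_succ]
    congr 2
    · congr 2; omega
  simp only [h2]
  rw [← Finset.sum_div, ← z]
  simp only [add_zero, pow_one]
  ring

lemma z_nonneg (m n : ℕ) (s : ℕ → ℕ) (j : ℕ) : 0 ≤ z m n s j := by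
  apply Finset.sum_nonneg
  intro t _
  positivity

lemma z_le_one (m n : ℕ) (s : ℕ → ℕ) (hs : ∀ t, s t < R m) (j : ℕ) : z m n s j ≤ 1 := by
  induction' hn : n - j with p ih generalizing j
  · rw [z_of_ge m n s j (by omega)]; exact zero_le_one
  · have hj : j < n := by omega
    rw [z_rec m n s j hj]
    have h1 : z m n s (j+1) ≤ 1 := ih (j+1) (by omega)
    have h2 : (2 * s j : ℝ) ≤ (k m : ℝ) - 1 := by
      have := hs j
      have : 2 * s j + 1 ≤ k m := by unfold k at *; omega
      have := (Nat.cast_le (α := ℝ)).mpr this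
      push_cast at this ⊢
      linarith
    have hk := k_posR m
    rw [div_le_one hk]
    linarith

lemma T_orbit (m n : ℕ) (s : ℕ → ℕ) (hs : ∀ t, s t < R m) (j : ℕ) (hj : j ≤ n) :
    (T m)^[j] (z m n s 0) = z m n s j := by
  induction' j with j ih
  · simp
  · rw [Function.iterate_succ_apply', ih (by omega)]
    have hjn : j < n := by omega
    rw [T, z_rec m n s j hjn]
    have hk := k_posR m
    rw [mul_div_cancel₀ _ hk.ne']
    have h1 : (2 * s j : ℝ) = 2 * (s j : ℕ) := by push_cast; ring
    rw [show (2 * s j + z m n s (j+1) : ℝ) = 2 * (s j : ℕ) + z m n s (j+1) by push_cast; ring]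
    exact w_nat (s j) _ (z_nonneg m n s (j+1)) (z_le_one m n s hs (j+1))

lemma z_sep (m n : ℕ) (s s' : ℕ → ℕ) (hs : ∀ t, s t < R m) (hs' : ∀ t, s' t < R m)
    (j : ℕ) (hj : j < n) (hne : s j ≠ s' j) :
    1 / (k m : ℝ) ≤ |z m n s j - z m n s' j| := by
  have hk := k_posR m
  rw [z_rec m n s j hj, z_rec m n s' j hj, div_sub_div_same, abs_div, abs_of_pos hk]
  rw [div_le_div_iff_of_pos_right hk]
  have h1 : (1:ℝ) ≤ |2 * (s j : ℝ) - 2 * (s' j : ℝ)| - 1 := by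
    have hx : (1:ℝ) ≤ |(s j : ℝ) - (s' j : ℝ)| := by
      rcases hne.lt_or_gt with h | h
      · rw [abs_sub_comm, abs_of_pos (by exact_mod_cast sub_pos.mpr (by exact_mod_cast h : (s j:ℝ) < s' j))]
        have : (s j : ℝ) + 1 ≤ s' j := by exact_mod_cast h
        linarith
      · rw [abs_of_pos (by exact_mod_cast sub_pos.mpr (by exact_mod_cast h : (s' j:ℝ) < s j))]
        have : (s' j : ℝ) + 1 ≤ s j := by exact_mod_cast h
        linarith
    have h2 : |2 * (s j : ℝ) - 2 * (s' j : ℝ)| = 2 * |(s j : ℝ) - (s' j : ℝ)| := by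
      rw [show 2 * (s j : ℝ) - 2 * (s' j : ℝ) = 2 * ((s j : ℝ) - (s' j : ℝ)) by ring,
        abs_mul, abs_two]
    rw [h2]; linarith
  have h3 : |z m n s (j+1) - z m n s' (j+1)| ≤ 1 := by
    rw [abs_le]
    have := z_nonneg m n s (j+1); have := z_nonneg m n s' (j+1)
    have := z_le_one m n s hs (j+1); have := z_le_one m n s' hs' (j+1)
    constructor <;> linarith
  have habs := abs_sub_abs_le_abs_sub (2 * (s j:ℝ) - 2 * (s' j:ℝ))
    (-(z m n s (j+1) - z m n s' (j+1)))
  have heq : 2 * (s j:ℝ) - 2*(s' j:ℝ) - -(z m n s (j+1) - z m n s' (j+1))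
      = 2 * (s j:ℝ) + z m n s (j+1) - (2 * (s' j:ℝ) + z m n s' (j+1)) := by ring
  rw [heq, abs_neg] at habs
  linarith

-- helper: floor cells
lemma floor_cell {ε u v : ℝ} (hε : 0 < ε) (hu : 0 ≤ u) (hv : 0 ≤ v)
    (h : ⌊u/ε⌋₊ = ⌊v/ε⌋₊) : |u - v| < ε := by
  have h1 : u/ε < ⌊u/ε⌋₊ + 1 := Nat.lt_floor_add_one _
  have h2 : v/ε < ⌊v/ε⌋₊ + 1 := Nat.lt_floor_add_one _
  have h3 : (⌊u/ε⌋₊ : ℝ) ≤ u/ε := Nat.floor_le (by positivity)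
  have h4 : (⌊v/ε⌋₊ : ℝ) ≤ v/ε := Nat.floor_le (by positivity)
  rw [h] at h1 h3
  have hu' : u = (u/ε)*ε := (div_mul_cancel₀ u hε.ne').symm
  have hv' : v = (v/ε)*ε := (div_mul_cancel₀ v hε.ne').symm
  rw [abs_lt]
  constructor <;> nlinarith

variable (g : ↥(Set.Icc (0:ℝ) 1) → ↥(Set.Icc (0:ℝ) 1))

lemma dynDist_lt {n : ℕ} {ε : ℝ} (hε : 0 < ε) {x y : ↥(Set.Icc (0:ℝ) 1)}
    (h : ∀ j < n, dist (g^[j] x) (g^[j] y) < ε) : dynDist g n x y < ε := by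
  rw [dynDist]
  have hsup : (Finset.range n).sup (fun k => nndist (g^[k] x) (g^[k] y)) < ε.toNNReal := by
    rw [Finset.sup_lt_iff (by simpa using hε : (⊥:ℝ≥0) < ε.toNNReal)]
    intro j hj
    have := h j (Finset.mem_range.mp hj)
    rw [← Real.toNNReal_lt_toNNReal_iff hε] at this
    simpa [nndist_dist] using this
  calc (((Finset.range n).sup (fun k => nndist (g^[k] x) (g^[k] y)) : ℝ≥0) : ℝ)
      < (ε.toNNReal : ℝ) := by exact_mod_cast hsup
  _ = ε := Real.coe_toNNReal _ hε.le

lemma dist_le_dynDist {n j : ℕ} (hj : j < n) (x y : ↥(Set.Icc (0:ℝ) 1)) :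
    dist (g^[j] x) (g^[j] y) ≤ dynDist g n x y := by
  rw [dynDist, dist_nndist]
  exact_mod_cast Finset.le_sup (f := fun k => nndist (g^[k] x) (g^[k] y))
    (Finset.mem_range.mpr hj)

lemma sep_card_le {n : ℕ} {ε : ℝ} (hε : 0 < ε) {E : Finset ↥(Set.Icc (0:ℝ) 1)}
    (hsep : ∀ x ∈ E, ∀ y ∈ E, x ≠ y → ε < dynDist g n x y) :
    E.card ≤ (⌊1/ε⌋₊ + 1)^n := by
  set M := ⌊1/ε⌋₊ + 1 with hM
  have hGdef : ∀ x : ↥(Set.Icc (0:ℝ) 1), ∀ j : Fin n, ⌊(g^[(j:ℕ)] x).1 / ε⌋₊ < M := by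
    intro x j
    have h1 : (g^[(j:ℕ)] x).1 ≤ 1 := (g^[(j:ℕ)] x).2.2
    have : ⌊(g^[(j:ℕ)] x).1/ε⌋₊ ≤ ⌊1/ε⌋₊ :=
      Nat.floor_le_floor (by gcongr)
    omega
  set G : ↥(Set.Icc (0:ℝ) 1) → (Fin n → Fin M) :=
    fun x j => ⟨⌊(g^[(j:ℕ)] x).1 / ε⌋₊, hGdef x j⟩ with hG
  have hinj : Set.InjOn G E := by
    intro x hx y hy hxy
    by_contra hne
    have hs := hsep x hx y hy hne
    have : dynDist g n x y < ε := by
      apply dynDist_lt g hε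
      intro j hj
      have := congrFun hxy (⟨j, hj⟩ : Fin n)
      have hcell : ⌊(g^[j] x).1/ε⌋₊ = ⌊(g^[j] y).1/ε⌋₊ := by
        simpa [hG] using congrArg Fin.val this
      have := floor_cell hε (g^[j] x).2.1 (g^[j] y).2.1 hcell
      rwa [Subtype.dist_eq, Real.dist_eq]
    linarith
  calc E.card ≤ (Finset.univ : Finset (Fin n → Fin M)).card :=
        Finset.card_le_card_of_injOn G (fun _ _ => Finset.mem_univ _) hinj
  _ = M^n := by simp [Finset.card_univ]

lemma dynSepNum_le {n : ℕ} {ε : ℝ} (hε : 0 < ε) :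
    dynSepNum g n ε ≤ (⌊1/ε⌋₊ + 1)^n := by
  apply csSup_le'
  rintro m ⟨E, hsep, rfl⟩
  exact sep_card_le g hε hsep

lemma dynSepNum_ge {n : ℕ} {ε : ℝ} (hε : 0 < ε) {E : Finset ↥(Set.Icc (0:ℝ) 1)}
    (hsep : ∀ x ∈ E, ∀ y ∈ E, x ≠ y → ε < dynDist g n x y) :
    E.card ≤ dynSepNum g n ε := by
  apply le_csSup
  · exact ⟨(⌊1/ε⌋₊ + 1)^n, by rintro m ⟨E', hsep', rfl⟩; exact sep_card_le g hε hsep'⟩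
  · exact ⟨E, hsep, rfl⟩

-- new material
noncomputable def f : ↥(Set.Icc (0:ℝ) 1) → ↥(Set.Icc (0:ℝ) 1) :=
  fun p => ⟨F p.1, F_mem p.1 p.2⟩

lemma f_cont : Continuous f :=
  Continuous.subtype_mk (F_cont.comp continuous_subtype_val) _

lemma f_val (p : ↥(Set.Icc (0:ℝ) 1)) : (f p : ℝ) = F p.1 := rfl

lemma T_iter_mem (m j : ℕ) (y : ℝ) (hy : y ∈ Icc (0:ℝ) 1) : (T m)^[j] y ∈ Icc (0:ℝ) 1 := by
  induction' j with j ih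
  · simpa
  · rw [Function.iterate_succ_apply']; exact T_mem m _

lemma f_iter_scaled (m j : ℕ) (y : ℝ) (hy : y ∈ Icc (0:ℝ) 1) :
    (f^[j] ⟨a m + a m * y, by
      have ha := a_pos m; have h2 := two_a_le_one m
      constructor <;> nlinarith [hy.1, hy.2]⟩ : ↥(Set.Icc (0:ℝ) 1)).1
    = a m + a m * (T m)^[j] y := by
  induction' j with j ih
  · simp
  · rw [Function.iterate_succ_apply', Function.iterate_succ_apply']
    rw [f_val, ih, F_scaled m _ (T_iter_mem m j y hy)]

/-- the coded points -/
noncomputable def se {n r : ℕ} (s : Fin n → Fin r) : ℕ → ℕ :=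
  fun t => if h : t < n then (s ⟨t, h⟩ : ℕ) else 0

lemma se_lt {m n : ℕ} (s : Fin n → Fin (R m)) (t : ℕ) : se s t < R m := by
  rw [se]; split
  · exact (s _).2
  · exact R_pos m

noncomputable def pt (m n : ℕ) (s : Fin n → Fin (R m)) : ↥(Set.Icc (0:ℝ) 1) :=
  ⟨a m + a m * z m n (se s) 0, by
    have ha := a_pos m; have h2 := two_a_le_one m
    have h0 := z_nonneg m n (se s) 0
    have h1 := z_le_one m n (se s) (se_lt s) 0
    constructor <;> nlinarith⟩

lemma pt_dynDist (m n : ℕ) (s s' : Fin n → Fin (R m)) (hne : s ≠ s') :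
    a m / (k m : ℝ) ≤ dynDist f n (pt m n s) (pt m n s') := by
  obtain ⟨j0, hj0⟩ := Function.ne_iff.mp hne
  have hj : (j0 : ℕ) < n := j0.2
  have hsej : se s j0 ≠ se s' j0 := by
    rw [se, se]
    split
    · intro hcon
      exact hj0 (Fin.ext (by simpa using hcon))
    · omega
  calc a m / (k m : ℝ) = a m * (1 / (k m : ℝ)) := by ring
  _ ≤ a m * |z m n (se s) j0 - z m n (se s') j0| := by
      apply mul_le_mul_of_nonneg_left
        (z_sep m n _ _ (se_lt s) (se_lt s') j0 hj hsej) (a_pos m).le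
  _ = dist ((f^[(j0:ℕ)] (pt m n s))) ((f^[(j0:ℕ)] (pt m n s'))) := by
      rw [Subtype.dist_eq]
      rw [show ((f^[(j0:ℕ)] (pt m n s)) : ℝ) = a m + a m * (T m)^[(j0:ℕ)] (z m n (se s) 0) from
        f_iter_scaled m j0 _ ⟨z_nonneg m n _ 0, z_le_one m n _ (se_lt s) 0⟩]
      rw [show ((f^[(j0:ℕ)] (pt m n s')) : ℝ) = a m + a m * (T m)^[(j0:ℕ)] (z m n (se s') 0) from
        f_iter_scaled m j0 _ ⟨z_nonneg m n _ 0, z_le_one m n _ (se_lt s') 0⟩]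
      rw [T_orbit m n _ (se_lt s) j0 hj.le, T_orbit m n _ (se_lt s') j0 hj.le]
      rw [Real.dist_eq]
      rw [show a m + a m * z m n (se s) j0 - (a m + a m * z m n (se s') j0)
          = a m * (z m n (se s) j0 - z m n (se s') j0) by ring]
      rw [abs_mul, abs_of_pos (a_pos m)]
  _ ≤ dynDist f n (pt m n s) (pt m n s') := dist_le_dynDist f hj _ _

lemma pt_inj (m n : ℕ) : Function.Injective (pt m n) := by
  intro s s' h
  by_contra hne
  have h1 := pt_dynDist m n s s' hne
  rw [h] at h1
  have h2 : dynDist f n (pt m n s') (pt m n s') = 0 := by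
    rw [dynDist]
    norm_num
  rw [h2] at h1
  have ha := a_pos m
  have hk : (0:ℝ) < k m := by exact_mod_cast (by have := k_ge3 m; omega : 0 < k m)
  nlinarith [div_pos ha hk]

lemma dynSepNum_ge_pow (m n : ℕ) {ε : ℝ} (hε : 0 < ε) (hεa : ε < a m / (k m : ℝ)) :
    (R m)^n ≤ dynSepNum f n ε := by
  classical
  set E : Finset ↥(Set.Icc (0:ℝ) 1) := Finset.image (pt m n) Finset.univ with hE
  have hsep : ∀ x ∈ E, ∀ y ∈ E, x ≠ y → ε < dynDist f n x y := by
    intro x hx y hy hxy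
    obtain ⟨s, _, rfl⟩ := Finset.mem_image.mp hx
    obtain ⟨s', _, rfl⟩ := Finset.mem_image.mp hy
    have hss : s ≠ s' := fun hc => hxy (by rw [hc])
    exact lt_of_lt_of_le hεa ((pt_dynDist m n s s' hss))
  have hcard : E.card = (R m)^n := by
    rw [hE, Finset.card_image_of_injective _ (pt_inj m n)]
    simp [Finset.card_univ]
  have : E.card ≤ dynSepNum f n ε := by
    apply le_csSup
    · exact ⟨(⌊1/ε⌋₊ + 1)^n, by rintro mm ⟨E', hsep', rfl⟩; exact sep_card_le f hε hsep'⟩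
    · exact ⟨E, hsep, rfl⟩
  omega

-- limsup helpers in ℝ≥0∞
lemma limsup_le_const {α : Type*} {l : Filter α} {u : α → ℝ≥0∞} {c : ℝ≥0∞}
    (h : ∀ᶠ x in l, u x ≤ c) : Filter.limsup u l ≤ c := by
  rw [Filter.limsup_eq]
  exact sInf_le h

lemma const_le_limsup {α : Type*} {l : Filter α} [l.NeBot] {u : α → ℝ≥0∞} {c : ℝ≥0∞}
    (h : ∀ᶠ x in l, c ≤ u x) : c ≤ Filter.limsup u l := by
  rw [Filter.limsup_eq]
  apply le_sInf
  intro b hb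
  obtain ⟨x, h1, h2⟩ := (h.and hb).exists
  exact h1.trans h2

-- dynS upper bound for anything on Icc
lemma dynS_le (g : ↥(Set.Icc (0:ℝ) 1) → ↥(Set.Icc (0:ℝ) 1)) {ε : ℝ} (hε : 0 < ε) :
    dynS g ε ≤ ENNReal.ofReal (Real.log ((⌊1/ε⌋₊ + 1 : ℕ) : ℝ)) := by
  apply limsup_le_const
  filter_upwards [Filter.eventually_gt_atTop 0] with n hn
  set M : ℕ := ⌊1/ε⌋₊ + 1
  have h1 : Real.log (dynSepNum g n ε) ≤ n * Real.log M := by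
    rw [← Real.log_pow]
    rcases Nat.eq_zero_or_pos (dynSepNum g n ε) with h0 | h0
    · rw [h0]
      simp only [Nat.cast_zero, Real.log_zero]
      have hM1 : (1:ℝ) ≤ (M:ℝ) := by exact_mod_cast Nat.one_le_iff_ne_zero.mpr (by omega)
      exact Real.log_nonneg (one_le_pow₀ hM1)
    · apply Real.log_le_log (by exact_mod_cast h0)
      exact_mod_cast dynSepNum_le g hε
  calc ENNReal.ofReal (Real.log (dynSepNum g n ε)) / (n : ℝ≥0∞)
      ≤ ENNReal.ofReal ((n : ℝ) * Real.log M) / (n : ℝ≥0∞) := by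
        exact ENNReal.div_le_div_right (ENNReal.ofReal_le_ofReal h1) _
  _ = (n : ℝ≥0∞) * ENNReal.ofReal (Real.log M) / (n : ℝ≥0∞) := by
        rw [ENNReal.ofReal_mul (by positivity), ENNReal.ofReal_natCast]
  _ = ENNReal.ofReal (Real.log M) := by
        rw [mul_comm, mul_div_assoc, ENNReal.div_self (by exact_mod_cast hn.ne') (by simp)]
        exact mul_one _

lemma dynS_ge (m : ℕ) {ε : ℝ} (hε : 0 < ε) (hεa : ε < a m / (k m : ℝ)) :
    ENNReal.ofReal (Real.log (R m)) ≤ dynS f ε := by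
  apply const_le_limsup
  filter_upwards [Filter.eventually_gt_atTop 0] with n hn
  have h1 : (n : ℝ) * Real.log (R m) ≤ Real.log (dynSepNum f n ε) := by
    rw [← Real.log_pow]
    apply Real.log_le_log (by have := R_pos m; positivity)
    exact_mod_cast dynSepNum_ge_pow m n hε hεa
  calc ENNReal.ofReal (Real.log (R m))
      = (n : ℝ≥0∞) * ENNReal.ofReal (Real.log (R m)) / (n : ℝ≥0∞) := by
        rw [mul_comm, mul_div_assoc, ENNReal.div_self (by exact_mod_cast hn.ne') (by simp),
          mul_one]
  _ = ENNReal.ofReal ((n:ℝ) * Real.log (R m)) / (n : ℝ≥0∞) := by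
        rw [ENNReal.ofReal_mul (by positivity), ENNReal.ofReal_natCast]
  _ ≤ ENNReal.ofReal (Real.log (dynSepNum f n ε)) / (n : ℝ≥0∞) :=
        ENNReal.div_le_div_right (ENNReal.ofReal_le_ofReal h1) _

-- upper bound on mdim, for any map of Icc 0 1
lemma mdim_le_one (g : ↥(Set.Icc (0:ℝ) 1) → ↥(Set.Icc (0:ℝ) 1)) : mdim g ≤ 1 := by
  rw [mdim]
  have key : ∀ᶠ ε in nhdsWithin (0:ℝ) (Set.Ioi 0),
      dynS g ε / ENNReal.ofReal |Real.log ε|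
        ≤ ENNReal.ofReal (1 + Real.log 2 / |Real.log ε|) := by
    filter_upwards [Ioo_mem_nhdsGT_of_mem (by norm_num : (0:ℝ) ∈ Set.Ico 0 (1/2))] with ε hε
    obtain ⟨hε0, hε2⟩ := hε
    have hlogneg : Real.log ε < 0 := Real.log_neg hε0 (by linarith)
    have habs : |Real.log ε| = -Real.log ε := abs_of_neg hlogneg
    have hL : 0 < |Real.log ε| := abs_pos.mpr hlogneg.ne
    have h1 : dynS g ε ≤ ENNReal.ofReal (Real.log 2 + |Real.log ε|) := by
      refine (dynS_le g hε0).trans (ENNReal.ofReal_le_ofReal ?_)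
      set M : ℕ := ⌊1/ε⌋₊ + 1 with hMdef
      have hM : ((M : ℕ) : ℝ) ≤ 2/ε := by
        push_cast
        have h2 : (⌊1/ε⌋₊ : ℝ) ≤ 1/ε := Nat.floor_le (by positivity)
        have h3 : (1:ℝ) ≤ 1/ε := by
          rw [le_div_iff₀ hε0]; linarith
        rw [show (2:ℝ)/ε = 1/ε + 1/ε by ring]
        simp only [hMdef, Nat.cast_add, Nat.cast_one]; linarith
      calc Real.log ((M : ℕ) : ℝ) ≤ Real.log (2/ε) := by
            apply Real.log_le_log (by positivity)
            exact hM
      _ = Real.log 2 - Real.log ε := Real.log_div (by norm_num) hε0.ne'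
      _ = Real.log 2 + |Real.log ε| := by rw [habs]; ring
    calc dynS g ε / ENNReal.ofReal |Real.log ε|
        ≤ ENNReal.ofReal (Real.log 2 + |Real.log ε|) / ENNReal.ofReal |Real.log ε| :=
          ENNReal.div_le_div_right h1 _
    _ = ENNReal.ofReal ((Real.log 2 + |Real.log ε|) / |Real.log ε|) :=
          (ENNReal.ofReal_div_of_pos hL).symm
    _ = ENNReal.ofReal (1 + Real.log 2 / |Real.log ε|) := by
          rw [add_div, div_self hL.ne']
          ring_nf
  have htend : Filter.Tendsto (fun ε : ℝ => ENNReal.ofReal (1 + Real.log 2 / |Real.log ε|))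
      (nhdsWithin 0 (Set.Ioi 0)) (nhds 1) := by
    have h1 : Filter.Tendsto (fun ε : ℝ => |Real.log ε|) (nhdsWithin 0 (Set.Ioi 0)) atTop :=
      tendsto_abs_atBot_atTop.comp Real.tendsto_log_nhdsGT_zero
    have h2 : Filter.Tendsto (fun ε : ℝ => 1 + Real.log 2 / |Real.log ε|)
        (nhdsWithin 0 (Set.Ioi 0)) (nhds 1) := by
      have := Filter.Tendsto.div_atTop (tendsto_const_nhds (x := Real.log 2)) h1
      simpa using tendsto_const_nhds.add this
    have := (ENNReal.continuous_ofReal.tendsto 1).comp h2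
    rw [ENNReal.ofReal_one] at this; exact this
  calc Filter.limsup (fun ε : ℝ => dynS g ε / ENNReal.ofReal |Real.log ε|)
        (nhdsWithin 0 (Set.Ioi 0))
      ≤ Filter.limsup (fun ε : ℝ => ENNReal.ofReal (1 + Real.log 2 / |Real.log ε|))
        (nhdsWithin 0 (Set.Ioi 0)) := Filter.limsup_le_limsup key
  _ = 1 := htend.limsup_eq


-- the scale sequence
noncomputable def εseq (m : ℕ) : ℝ := (1/2)^(2^m + m + 2)

lemma εseq_pos (m : ℕ) : 0 < εseq m := by unfold εseq; positivity

lemma kN (m : ℕ) : k m = 2^(2^m) + 1 := by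
  have hE : 1 ≤ 2^m := Nat.one_le_two_pow
  unfold k R
  have h1 : 2 * 2^(2^m - 1) = 2^(2^m - 1 + 1) := (pow_succ' 2 (2^m - 1)).symm
  rw [h1]
  congr 2
  omega

lemma εseq_lt (m : ℕ) : εseq m < a m / (k m : ℝ) := by
  have hE : 1 ≤ 2^m := Nat.one_le_two_pow
  have hkR : (k m : ℝ) = 2^(2^m) + 1 := by rw [kN]; push_cast; ring
  have hk0 : (0:ℝ) < (k m : ℝ) := by rw [hkR]; positivity
  rw [lt_div_iff₀ hk0]
  have hsplit : εseq m = (1/2:ℝ)^(m+1) * (1/2)^(2^m + 1) := by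
    rw [εseq, ← pow_add]
    congr 1
    omega
  rw [hsplit, hkR, a]
  have hP : (2:ℝ) ≤ (2:ℝ)^(2^m) := by
    calc (2:ℝ) = 2^1 := (pow_one 2).symm
    _ ≤ 2^(2^m) := by apply pow_le_pow_right₀ (by norm_num) hE
  have h2 : (1/2:ℝ)^(2^m + 1) * ((2:ℝ)^(2^m) + 1) < 1 := by
    rw [one_div, inv_pow, pow_succ]
    rw [show ((2:ℝ)^(2^m) * 2)⁻¹ * ((2:ℝ)^(2^m) + 1) = ((2:ℝ)^(2^m) + 1)/((2:ℝ)^(2^m) * 2) by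
      ring]
    rw [div_lt_one (by positivity)]
    nlinarith
  have hpos : (0:ℝ) < (1/2:ℝ)^(m+1) := by positivity
  calc (1/2:ℝ)^(m+1) * (1/2)^(2^m+1) * ((2:ℝ)^(2^m) + 1)
      = (1/2:ℝ)^(m+1) * ((1/2)^(2^m+1) * ((2:ℝ)^(2^m) + 1)) := by ring
  _ < (1/2:ℝ)^(m+1) * 1 := by exact mul_lt_mul_of_pos_left h2 hpos
  _ = (1/2:ℝ)^(m+1) := mul_one _

lemma log_εseq (m : ℕ) : |Real.log (εseq m)| = ((2^m + m + 2 : ℕ) : ℝ) * Real.log 2 := by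
  have hL : (0:ℝ) < Real.log 2 := Real.log_pos (by norm_num)
  rw [εseq, Real.log_pow, show (1/2:ℝ) = 2⁻¹ by norm_num, Real.log_inv, mul_neg, abs_neg,
    abs_of_nonneg (by positivity)]

lemma log_R (m : ℕ) : Real.log (R m) = ((2^m - 1 : ℕ) : ℝ) * Real.log 2 := by
  rw [show ((R m : ℕ):ℝ) = (2:ℝ)^(2^m - 1) by rw [R]; push_cast; ring, Real.log_pow]

noncomputable def q (m : ℕ) : ℝ := ((2^m - 1 : ℕ) : ℝ) / ((2^m + m + 2 : ℕ) : ℝ)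

lemma q_tendsto : Filter.Tendsto q atTop (nhds 1) := by
  have hq : ∀ m : ℕ, q m = (1 - (1/2:ℝ)^m)/(1 + ((m:ℝ)+2) * (1/2)^m) := by
    intro m
    have hE : 1 ≤ 2^m := Nat.one_le_two_pow
    have hcast1 : ((2^m - 1 : ℕ) : ℝ) = (2:ℝ)^m - 1 := by
      rw [Nat.cast_sub hE]; push_cast; ring
    have hcast2 : ((2^m + m + 2 : ℕ) : ℝ) = (2:ℝ)^m + m + 2 := by push_cast; ring
    have hP : (0:ℝ) < (2:ℝ)^m := by positivity
    rw [q, hcast1, hcast2, show (1/2:ℝ)^m = ((2:ℝ)^m)⁻¹ by rw [one_div, inv_pow]]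
    have hd1 : (2:ℝ)^m + m + 2 ≠ 0 := by positivity
    have hd2 : 1 + ((m:ℝ)+2) * ((2:ℝ)^m)⁻¹ ≠ 0 := by positivity
    rw [div_eq_div_iff hd1 hd2]
    field_simp
    ring
  have hA : Filter.Tendsto (fun m : ℕ => (1/2:ℝ)^m) atTop (nhds 0) :=
    tendsto_pow_atTop_nhds_zero_of_lt_one (by norm_num) (by norm_num)
  have hB : Filter.Tendsto (fun m : ℕ => ((m:ℝ)+2) * (1/2)^m) atTop (nhds 0) := by
    have hs : Summable (fun m : ℕ => ((m:ℝ)+2) * (1/2)^m) := by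
      have h1 : Summable (fun m : ℕ => (m:ℝ)^1 * (1/2)^m) :=
        summable_pow_mul_geometric_of_norm_lt_one 1 (by rw [Real.norm_eq_abs, abs_of_pos] <;> norm_num)
      have h2 : Summable (fun m : ℕ => (2:ℝ) * (1/2)^m) :=
        (summable_geometric_of_lt_one (by norm_num) (by norm_num)).mul_left 2
      have := h1.add h2
      apply this.congr
      intro m
      simp [pow_one]
      ring
    exact hs.tendsto_atTop_zero
  have := Filter.Tendsto.div (f := fun m : ℕ => 1 - (1/2:ℝ)^m)
    (g := fun m : ℕ => 1 + ((m:ℝ)+2) * (1/2)^m)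
    (by simpa using tendsto_const_nhds.sub hA)
    (by simpa using tendsto_const_nhds.add hB) (by norm_num)
  simp only [div_one] at this
  apply this.congr'
  filter_upwards with m
  exact (hq m).symm

lemma εseq_tendsto : Filter.Tendsto εseq atTop (nhdsWithin 0 (Set.Ioi 0)) := by
  apply tendsto_nhdsWithin_of_tendsto_nhds_of_eventually_within
  · have hK : Filter.Tendsto (fun m : ℕ => 2^m + m + 2) atTop atTop := by
      apply tendsto_atTop_mono (fun m => by have := Nat.zero_le (2^m); omega : ∀ m : ℕ, m ≤ 2^m + m + 2)
      exact tendsto_id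
    have hA : Filter.Tendsto (fun n : ℕ => (1/2:ℝ)^n) atTop (nhds 0) :=
      tendsto_pow_atTop_nhds_zero_of_lt_one (by norm_num) (by norm_num)
    exact hA.comp hK
  · filter_upwards with m
    exact εseq_pos m

lemma mdim_ge_one : (1:ℝ≥0∞) ≤ mdim f := by
  rw [mdim, Filter.limsup_eq]
  apply le_sInf
  intro b hb
  have hev : ∀ᶠ m in atTop,
      dynS f (εseq m) / ENNReal.ofReal |Real.log (εseq m)| ≤ b :=
    εseq_tendsto.eventually hb
  have hc : ∀ m : ℕ, ENNReal.ofReal (q m)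
      ≤ dynS f (εseq m) / ENNReal.ofReal |Real.log (εseq m)| := by
    intro m
    have hL : (0:ℝ) < Real.log 2 := Real.log_pos (by norm_num)
    have hden : (0:ℝ) < ((2^m + m + 2 : ℕ) : ℝ) * Real.log 2 := by
      apply mul_pos _ hL
      positivity
    have h1 : ENNReal.ofReal (Real.log (R m)) ≤ dynS f (εseq m) :=
      dynS_ge m (εseq_pos m) (εseq_lt m)
    calc ENNReal.ofReal (q m)
        = ENNReal.ofReal ((((2^m - 1 : ℕ):ℝ) * Real.log 2) / (((2^m + m + 2 : ℕ):ℝ) * Real.log 2)) := by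
          rw [q, mul_div_mul_right _ _ hL.ne']
    _ = ENNReal.ofReal (((2^m - 1 : ℕ):ℝ) * Real.log 2) / ENNReal.ofReal |Real.log (εseq m)| := by
          rw [ENNReal.ofReal_div_of_pos hden, log_εseq]
    _ = ENNReal.ofReal (Real.log (R m)) / ENNReal.ofReal |Real.log (εseq m)| := by
          rw [log_R]
    _ ≤ dynS f (εseq m) / ENNReal.ofReal |Real.log (εseq m)| :=
          ENNReal.div_le_div_right h1 _
  have hev2 : ∀ᶠ m in atTop, ENNReal.ofReal (q m) ≤ b := by
    filter_upwards [hev] with m hm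
    exact (hc m).trans hm
  have htend : Filter.Tendsto (fun m => ENNReal.ofReal (q m)) atTop (nhds 1) := by
    have := (ENNReal.continuous_ofReal.tendsto 1).comp q_tendsto
    rw [ENNReal.ofReal_one] at this; exact this
  exact le_of_tendsto htend hev2


end

end Prop53

/-- **Proposition 5.3**: there exists a continuous self-map of `[0,1]` (with the Euclidean
metric) with maximal upper metric mean dimension, namely `mdim([0,1],d,f) = 1`. -/
theorem exists_continuous_map_mdim_eq_one :
    ∃ f : (Set.Icc (0:ℝ) 1) → (Set.Icc (0:ℝ) 1), Continuous f ∧ mdim f = 1 :=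
  ⟨Prop53.f, Prop53.f_cont, le_antisymm (Prop53.mdim_le_one Prop53.f) Prop53.mdim_ge_one⟩
end

section
/- Let C([0,1]) denote the space of continuous maps from [0,1] to itself, equipped with the uniform (sup) metric, and let d be the Euclidean metric on [0,1]. Then the set A = { F ∈ C([0,1]) : mdim([0,1],d,F) = 1 } is dense in C([0,1]). -/
open Filter Set Metric Function
open scoped ENNReal NNReal

noncomputable section MdimAux

open Real

def tw (t : ℝ) : ℝ := Real.arccos (Real.cos (Real.pi * t)) / Real.pi

lemma tw_cont : Continuous tw :=
  (Real.continuous_arccos.comp (Real.continuous_cos.comp (continuous_const.mul continuous_id))).div_const _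

lemma tw_nonneg (t : ℝ) : 0 ≤ tw t := div_nonneg (Real.arccos_nonneg _) Real.pi_pos.le

lemma tw_le_one (t : ℝ) : tw t ≤ 1 := by
  unfold tw
  rw [div_le_one Real.pi_pos]
  exact Real.arccos_le_pi _

lemma tw_eq (t : ℝ) (ht : t ∈ Set.Icc (0:ℝ) 1) : tw t = t := by
  unfold tw
  rw [Real.arccos_cos (mul_nonneg Real.pi_pos.le ht.1) (by nlinarith [Real.pi_pos, ht.2])]
  field_simp

lemma tw_add_even (k : ℤ) (t : ℝ) : tw (2 * k + t) = tw t := by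
  unfold tw
  congr 2
  rw [show Real.pi * (2*(k:ℝ) + t) = Real.pi * t + (k:ℝ) * (2 * Real.pi) by ring]
  exact Real.cos_add_int_mul_two_pi _ k

lemma tw_odd (m : ℕ) (hm : Odd m) : tw m = 1 := by
  obtain ⟨k, hk⟩ := hm
  have : (m:ℝ) = 2*(k:ℤ) + 1 := by rw [hk]; push_cast; ring
  rw [this, tw_add_even]
  unfold tw
  rw [mul_one, Real.cos_pi, Real.arccos_neg_one, div_self Real.pi_pos.ne']

lemma tw_zero : tw 0 = 0 := tw_eq 0 ⟨le_refl _, zero_le_one⟩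

/-! clamp -/
def clmp (t : ℝ) : ℝ := max 0 (min 1 t)

lemma clmp_cont : Continuous clmp := continuous_const.max (continuous_const.min continuous_id)
lemma clmp_mem (t : ℝ) : clmp t ∈ Set.Icc (0:ℝ) 1 :=
  ⟨le_max_left _ _, max_le (by norm_num) (min_le_left _ _)⟩
lemma clmp_of_mem {t : ℝ} (h : t ∈ Set.Icc (0:ℝ) 1) : clmp t = t := by
  unfold clmp; rw [min_eq_right h.2, max_eq_right h.1]
lemma clmp_of_nonpos {t : ℝ} (h : t ≤ 0) : clmp t = 0 := by
  unfold clmp; rw [min_eq_right (h.trans zero_le_one), max_eq_left h]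
lemma clmp_of_one_le {t : ℝ} (h : 1 ≤ t) : clmp t = 1 := by
  unfold clmp; rw [min_eq_left h, max_eq_right zero_le_one]

/-! deviation -/
def dev (m : ℕ) (t : ℝ) : ℝ := tw (m * clmp t) - clmp t

lemma dev_cont (m : ℕ) : Continuous (dev m) :=
  (tw_cont.comp (continuous_const.mul clmp_cont)).sub clmp_cont

lemma dev_abs_le (m : ℕ) (t : ℝ) : |dev m t| ≤ 1 := by
  have h1 := tw_nonneg (m * clmp t); have h2 := tw_le_one (m * clmp t)
  have h3 := clmp_mem t
  rw [abs_le]; constructor <;> simp only [dev] <;> nlinarith [h3.1, h3.2]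

lemma dev_of_nonpos {m : ℕ} {t : ℝ} (h : t ≤ 0) : dev m t = 0 := by
  unfold dev; rw [clmp_of_nonpos h]; simp [tw_zero]

lemma dev_of_one_le {m : ℕ} (hm : Odd m) {t : ℝ} (h : 1 ≤ t) : dev m t = 0 := by
  unfold dev; rw [clmp_of_one_le h, mul_one, tw_odd m hm]; ring

lemma dev_of_mem {m : ℕ} {t : ℝ} (h : t ∈ Set.Icc (0:ℝ) 1) : dev m t = tw (m * t) - t := by
  unfold dev; rw [clmp_of_mem h]

/-! parameters -/
def aJ (j : ℕ) : ℝ := 1 - (1/2:ℝ)^j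
def lJ (j : ℕ) : ℝ := (1/2:ℝ)^(j+1)
def mJ (j : ℕ) : ℕ := 2^(j^2+1)+1

lemma lJ_pos (j : ℕ) : 0 < lJ j := by unfold lJ; positivity
lemma aJ_nonneg (j : ℕ) : 0 ≤ aJ j := by
  have : (1/2:ℝ)^j ≤ 1 := pow_le_one₀ (by norm_num) (by norm_num)
  unfold aJ; linarith
lemma aJ_succ (j : ℕ) : aJ (j+1) = aJ j + lJ j := by
  unfold aJ lJ; rw [pow_succ]; ring
lemma aJ_mono : Monotone aJ := by
  apply monotone_nat_of_le_succ
  intro j; rw [aJ_succ]; linarith [lJ_pos j]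
lemma aJ_add_lJ_le_one (j : ℕ) : aJ j + lJ j ≤ 1 := by
  rw [← aJ_succ]; unfold aJ
  have : (0:ℝ) < (1/2:ℝ)^(j+1) := by positivity
  linarith
lemma mJ_odd (j : ℕ) : Odd (mJ j) := ⟨2^(j^2), by unfold mJ; rw [pow_succ]; ring⟩
lemma mJ_ge_two (j : ℕ) : 2 ≤ (mJ j : ℝ) := by
  have h : (2:ℕ) ≤ mJ j := by
    have : (1:ℕ) ≤ 2^(j^2+1) := Nat.one_le_two_pow
    unfold mJ; omega
  exact_mod_cast h

/-! the gadget -/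
def ψJ (j : ℕ) (x : ℝ) : ℝ := lJ j * dev (mJ j) ((x - aJ j)/lJ j)

def gg (x : ℝ) : ℝ := x + ∑' j, ψJ j x

lemma ψJ_cont (j : ℕ) : Continuous (ψJ j) :=
  continuous_const.mul ((dev_cont _).comp ((continuous_id.sub continuous_const).div_const _))

lemma ψJ_abs_le (j : ℕ) (x : ℝ) : |ψJ j x| ≤ (1/2:ℝ)^(j+1) := by
  unfold ψJ
  rw [abs_mul, abs_of_pos (lJ_pos j)]
  calc lJ j * |dev (mJ j) ((x - aJ j)/lJ j)| ≤ lJ j * 1 :=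
        mul_le_mul_of_nonneg_left (dev_abs_le _ _) (lJ_pos j).le
    _ = (1/2:ℝ)^(j+1) := by unfold lJ; ring

lemma gg_cont : Continuous gg := by
  apply continuous_id.add
  have hsum : Summable (fun j : ℕ => (1/2:ℝ)^(j+1)) := by
    have := (summable_geometric_of_lt_one (r := (1/2:ℝ)) (by norm_num) (by norm_num)).mul_right (1/2)
    simpa [pow_succ] using this
  exact continuous_tsum ψJ_cont hsum
    (fun j x => by rw [Real.norm_eq_abs]; exact ψJ_abs_le j x)

lemma ψJ_zero_left {j : ℕ} {x : ℝ} (h : x ≤ aJ j) : ψJ j x = 0 := by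
  unfold ψJ
  rw [dev_of_nonpos (div_nonpos_of_nonpos_of_nonneg (by linarith) (lJ_pos j).le), mul_zero]

lemma ψJ_zero_right {j : ℕ} {x : ℝ} (h : aJ j + lJ j ≤ x) : ψJ j x = 0 := by
  unfold ψJ
  rw [dev_of_one_le (mJ_odd j) ((le_div_iff₀ (lJ_pos j)).2 (by linarith)), mul_zero]

lemma gg_eval {j : ℕ} {t : ℝ} (ht : t ∈ Set.Icc (0:ℝ) 1) :
    gg (aJ j + lJ j * t) = aJ j + lJ j * tw (mJ j * t) := by
  have hx1 : aJ j ≤ aJ j + lJ j * t := by nlinarith [lJ_pos j, ht.1]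
  have hx2 : aJ j + lJ j * t ≤ aJ j + lJ j := by nlinarith [lJ_pos j, ht.2]
  have hts : (∑' i, ψJ i (aJ j + lJ j * t)) = ψJ j (aJ j + lJ j * t) := by
    apply tsum_eq_single
    intro i hij
    rcases lt_or_gt_of_ne hij with h | h
    · -- i < j : x ≥ aJ j ≥ aJ (i+1) = aJ i + lJ i
      apply ψJ_zero_right
      rw [← aJ_succ]
      exact le_trans (aJ_mono h) hx1
    · -- i > j : x ≤ aJ (j+1) ≤ aJ i
      apply ψJ_zero_left
      calc aJ j + lJ j * t ≤ aJ j + lJ j := hx2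
        _ = aJ (j+1) := (aJ_succ j).symm
        _ ≤ aJ i := aJ_mono h
  unfold gg
  rw [hts]
  unfold ψJ
  have harg : (aJ j + lJ j * t - aJ j)/lJ j = t := by
    rw [add_sub_cancel_left, mul_comm, mul_div_assoc, div_self (lJ_pos j).ne', mul_one]
  rw [harg, dev_of_mem ht]
  ring

lemma gg_zero : gg 0 = 0 := by
  have h0 : (0:ℝ) = aJ 0 + lJ 0 * 0 := by unfold aJ lJ; norm_num
  rw [h0, gg_eval ⟨le_refl _, zero_le_one⟩]
  simp [tw_zero, aJ]

lemma gg_one : gg 1 = 1 := by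
  unfold gg
  have h : (fun i => ψJ i 1) = fun _ => (0:ℝ) :=
    funext fun i => ψJ_zero_right (aJ_add_lJ_le_one i)
  rw [h, tsum_zero, add_zero]

lemma tw_mem (t : ℝ) : tw t ∈ Set.Icc (0:ℝ) 1 := ⟨tw_nonneg t, tw_le_one t⟩

lemma gg_maps {x : ℝ} (hx : x ∈ Set.Icc (0:ℝ) 1) : gg x ∈ Set.Icc (0:ℝ) 1 := by
  rcases eq_or_lt_of_le hx.2 with h1 | h1
  · rw [h1, gg_one]; exact ⟨zero_le_one, le_refl _⟩
  · -- find j with aJ j ≤ x < aJ (j+1)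
    have hne : ∃ j, x < aJ (j+1) := by
      obtain ⟨j, hj⟩ := exists_pow_lt_of_lt_one (by linarith : (0:ℝ) < 1 - x) (by norm_num : (1/2:ℝ) < 1)
      refine ⟨j, ?_⟩
      unfold aJ
      have hmono : (1/2:ℝ)^(j+1) ≤ (1/2:ℝ)^j :=
        pow_le_pow_of_le_one (by norm_num) (by norm_num) (Nat.le_succ j)
      linarith
    classical
    let j := Nat.find hne
    have hj2 : x < aJ (j+1) := Nat.find_spec hne
    have hj1 : aJ j ≤ x := by
      rcases Nat.eq_zero_or_pos j with h0 | h0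
      · rw [h0]; unfold aJ; simpa using hx.1
      · have := Nat.find_min hne (m := j - 1) (by omega)
        push_neg at this
        calc aJ j = aJ (j - 1 + 1) := by congr 1; omega
          _ ≤ x := this
    set t := (x - aJ j)/lJ j with hht
    have ht0 : 0 ≤ t := div_nonneg (by linarith) (lJ_pos j).le
    have ht1 : t ≤ 1 := by
      rw [div_le_one (lJ_pos j)]
      have := aJ_succ j
      linarith
    have hxt : x = aJ j + lJ j * t := by
      rw [hht, mul_div_assoc', mul_comm, mul_div_assoc, div_self (lJ_pos j).ne', mul_one]
      ring
    rw [hxt, gg_eval ⟨ht0, ht1⟩]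
    have h2 := tw_mem ((mJ j : ℝ) * t)
    constructor
    · nlinarith [aJ_nonneg j, lJ_pos j, h2.1]
    · have := aJ_add_lJ_le_one j
      nlinarith [lJ_pos j, h2.2]

/-! ## symbolic points for the zigzag `t ↦ tw (m * t)` -/

def yy (m n : ℕ) (d : ℕ → ℕ) (k : ℕ) : ℝ :=
  ∑ i ∈ Finset.range n, (d (k+i) : ℝ) / (m:ℝ)^(i+1)

section symbolic
variable {m n : ℕ} {d : ℕ → ℕ} (hm : 2 ≤ (m:ℝ))

lemma geom_id (N : ℕ) (hm : 2 ≤ (m:ℝ)) :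
    ∑ i ∈ Finset.range N, ((m:ℝ)-1)/(m:ℝ)^(i+1) = 1 - 1/(m:ℝ)^N := by
  have hm0 : (m:ℝ) ≠ 0 := by linarith
  induction N with
  | zero => simp
  | succ N ih =>
    rw [Finset.sum_range_succ, ih]
    have : (m:ℝ)^(N+1) = (m:ℝ)^N * m := pow_succ (m:ℝ) N
    field_simp
    ring

lemma yy_nonneg (k : ℕ) : 0 ≤ yy m n d k := by
  apply Finset.sum_nonneg
  intro i _
  positivity

lemma yy_le (hle : ∀ i, (d i : ℝ) ≤ (m:ℝ) - 1) (k : ℕ) (hm : 2 ≤ (m:ℝ)) :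
    yy m n d k ≤ 1 - 1/(m:ℝ)^n := by
  rw [← geom_id n hm]
  apply Finset.sum_le_sum
  intro i _
  gcongr
  exact hle _

lemma yy_mem (hle : ∀ i, (d i : ℝ) ≤ (m:ℝ) - 1) (k : ℕ) (hm : 2 ≤ (m:ℝ)) :
    yy m n d k ∈ Set.Icc (0:ℝ) 1 := by
  refine ⟨yy_nonneg k, le_trans (yy_le hle k hm) ?_⟩
  have : (0:ℝ) < (m:ℝ)^n := by positivity
  have : 0 < 1/(m:ℝ)^n := by positivity
  linarith

lemma yy_shift (h0 : ∀ i, n ≤ i → d i = 0) (k : ℕ) (hm : 2 ≤ (m:ℝ)) :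
    (m:ℝ) * yy m n d k = (d k : ℝ) + yy m n d (k+1) := by
  have hm0 : (m:ℝ) ≠ 0 := by linarith
  have e1 : yy m n d k = ∑ i ∈ Finset.range (n+1), (d (k+i):ℝ)/(m:ℝ)^(i+1) := by
    rw [Finset.sum_range_succ, h0 (k+n) (by omega)]
    simp [yy]
  rw [e1, Finset.mul_sum]
  have e2 : ∀ i ∈ Finset.range (n+1), (m:ℝ) * ((d (k+i):ℝ)/(m:ℝ)^(i+1)) = (d (k+i):ℝ)/(m:ℝ)^i := by
    intro i _
    rw [pow_succ]
    field_simp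
  rw [Finset.sum_congr rfl e2, Finset.sum_range_succ']
  simp only [pow_zero, div_one]
  have e3 : ∀ i, (d (k+(i+1)):ℝ)/(m:ℝ)^(i+1) = (d ((k+1)+i):ℝ)/(m:ℝ)^(i+1) := by
    intro i
    have h1 : k + (i+1) = (k+1)+i := by omega
    rw [h1]
  rw [Finset.sum_congr rfl (fun i _ => e3 i)]
  rw [add_comm]
  rfl

lemma yy_step (hev : ∀ i, Even (d i)) (hle : ∀ i, (d i : ℝ) ≤ (m:ℝ) - 1)
    (h0 : ∀ i, n ≤ i → d i = 0) (k : ℕ) (hm : 2 ≤ (m:ℝ)) :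
    tw ((m:ℝ) * yy m n d k) = yy m n d (k+1) := by
  rw [yy_shift h0 k hm]
  obtain ⟨r, hr⟩ := hev k
  have : ((d k : ℕ) : ℝ) = 2 * (r : ℤ) := by rw [hr]; push_cast; ring
  rw [this, tw_add_even]
  exact tw_eq _ (yy_mem hle (k+1) hm)

lemma yy_iterate (hev : ∀ i, Even (d i)) (hle : ∀ i, (d i : ℝ) ≤ (m:ℝ) - 1)
    (h0 : ∀ i, n ≤ i → d i = 0) (hm : 2 ≤ (m:ℝ)) (k : ℕ) :
    (fun t => tw ((m:ℝ) * t))^[k] (yy m n d 0) = yy m n d k := by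
  induction k with
  | zero => rfl
  | succ k ih => rw [Function.iterate_succ_apply', ih]; exact yy_step hev hle h0 k hm

lemma yy_sep {d' : ℕ → ℕ}
    (hev : ∀ i, Even (d i)) (hle : ∀ i, (d i : ℝ) ≤ (m:ℝ) - 1) (h0 : ∀ i, n ≤ i → d i = 0)
    (hev' : ∀ i, Even (d' i)) (hle' : ∀ i, (d' i : ℝ) ≤ (m:ℝ) - 1) (h0' : ∀ i, n ≤ i → d' i = 0)
    {k : ℕ} (hne : d k ≠ d' k) (hm : 2 ≤ (m:ℝ)) :
    1/(m:ℝ) ≤ |yy m n d k - yy m n d' k| := by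
  have hm0 : (0:ℝ) < m := by linarith
  have e : yy m n d k = ((d k:ℝ) + yy m n d (k+1))/m := by
    rw [← yy_shift h0 k hm]
    field_simp
  have e' : yy m n d' k = ((d' k:ℝ) + yy m n d' (k+1))/m := by
    rw [← yy_shift h0' k hm]
    field_simp
  have hy := yy_mem (n := n) hle (k+1) hm
  have hy' := yy_mem (n := n) hle' (k+1) hm
  have hdig : 2 ≤ |(d k : ℝ) - (d' k : ℝ)| := by
    obtain ⟨p, hp⟩ := hev k
    obtain ⟨q, hq⟩ := hev' k
    rcases Nat.lt_or_ge (d k) (d' k) with h | h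
    · have h3 : d k + 2 ≤ d' k := by omega
      have h4 : (d k:ℝ) + 2 ≤ (d' k:ℝ) := by exact_mod_cast h3
      rw [abs_sub_comm, abs_of_nonneg (by linarith)]
      linarith
    · have h3 : d' k + 2 ≤ d k := by omega
      have h4 : (d' k:ℝ) + 2 ≤ (d k:ℝ) := by exact_mod_cast h3
      rw [abs_of_nonneg (by linarith)]
      linarith
  set A := ((d k:ℝ) - d' k)/m with hA
  set B := (yy m n d (k+1) - yy m n d' (k+1))/m with hB
  have expand : yy m n d k - yy m n d' k = A + B := by
    rw [e, e', hA, hB]; ring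
  rw [expand]
  have habs : |A| ≤ |A + B| + |B| := by
    calc |A| = |(A+B) + (-B)| := by ring_nf
      _ ≤ |A+B| + |-B| := abs_add_le _ _
      _ = |A+B| + |B| := by rw [abs_neg]
  have h1 : |A| = |(d k:ℝ) - d' k|/m := by
    rw [hA, abs_div, abs_of_pos hm0]
  have h2 : |B| ≤ 1/m := by
    rw [hB, abs_div, abs_of_pos hm0]
    gcongr
    rw [abs_le]
    constructor <;> [linarith [hy.1, hy'.2]; linarith [hy.2, hy'.1]]
  have h3 : 2/(m:ℝ) ≤ |(d k:ℝ) - d' k|/m := by gcongr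
  have h4 : 2/(m:ℝ) = 1/m + 1/m := by ring
  linarith

end symbolic

open scoped ENNReal NNReal

universe u

section dynlem
variable {X : Type u} [MetricSpace X]

lemma dist_le_dynDist {T : X → X} {n k : ℕ} (hk : k < n) (x y : X) :
    dist (T^[k] x) (T^[k] y) ≤ dynDist T n x y := by
  rw [dist_nndist]
  exact_mod_cast Finset.le_sup (f := fun k => nndist (T^[k] x) (T^[k] y)) (Finset.mem_range.2 hk)

lemma exists_of_lt_dynDist {T : X → X} {n : ℕ} {ε : ℝ} (hε : 0 ≤ ε) {x y : X}
    (h : ε < dynDist T n x y) : ∃ k < n, ε < dist (T^[k] x) (T^[k] y) := by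
  have h' : ε.toNNReal < (Finset.range n).sup (fun k => nndist (T^[k] x) (T^[k] y)) := by
    rw [← NNReal.coe_lt_coe, Real.coe_toNNReal ε hε]
    exact h
  obtain ⟨k, hk, hlt⟩ := Finset.lt_sup_iff.1 h'
  refine ⟨k, Finset.mem_range.1 hk, ?_⟩
  rw [dist_nndist]
  calc ε = (ε.toNNReal : ℝ) := (Real.coe_toNNReal ε hε).symm
    _ < _ := by exact_mod_cast hlt

end dynlem

namespace MdimProof

abbrev XI := ↥(Set.Icc (0:ℝ) 1)

lemma coe_mem (x : XI) : (x:ℝ) ∈ Set.Icc (0:ℝ) 1 := x.2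

lemma floor_near {a b ε : ℝ} (hε : 0 < ε) (ha : 0 ≤ a) (hb : 0 ≤ b)
    (h : ⌊a/ε⌋₊ = ⌊b/ε⌋₊) : |a - b| < ε := by
  have h1 : (⌊a/ε⌋₊:ℝ) ≤ a/ε := Nat.floor_le (by positivity)
  have h2 : a/ε < ⌊a/ε⌋₊ + 1 := Nat.lt_floor_add_one _
  have h3 : (⌊b/ε⌋₊:ℝ) ≤ b/ε := Nat.floor_le (by positivity)
  have h4 : b/ε < ⌊b/ε⌋₊ + 1 := Nat.lt_floor_add_one _
  rw [h] at h1 h2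
  have h5 : |a/ε - b/ε| < 1 := abs_lt.2 ⟨by linarith, by linarith⟩
  have h6 : |a - b| / ε < 1 := by
    rw [← abs_of_pos hε, ← abs_div]
    rwa [sub_div]
  calc |a - b| = (|a-b|/ε) * ε := by field_simp
    _ < 1 * ε := by apply mul_lt_mul_of_pos_right h6 hε
    _ = ε := one_mul ε

lemma sep_card_le {T : XI → XI} {n : ℕ} {ε : ℝ} (hε : 0 < ε) {E : Finset XI}
    (hE : ∀ x ∈ E, ∀ y ∈ E, x ≠ y → ε < dynDist T n x y) :
    E.card ≤ (⌊1/ε⌋₊ + 1)^n := by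
  classical
  set K := ⌊1/ε⌋₊ + 1 with hK
  have hcode : ∀ (x : XI) (k : ℕ), ⌊((T^[k] x : ℝ))/ε⌋₊ < K := by
    intro x k
    have hx : (T^[k] x : ℝ) ≤ 1 := (coe_mem _).2
    have h1 : ⌊((T^[k] x : ℝ))/ε⌋₊ ≤ ⌊1/ε⌋₊ := Nat.floor_le_floor (by gcongr)
    omega
  set code : XI → (Fin n → Fin K) := fun x k => ⟨⌊((T^[(k:ℕ)] x : ℝ))/ε⌋₊, hcode x k⟩ with hc
  have hinj : Set.InjOn code E := by
    intro x hx y hy hxy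
    by_contra hne
    obtain ⟨k, hk, hlt⟩ := exists_of_lt_dynDist hε.le (hE x hx y hy hne)
    have heq : ⌊((T^[k] x : ℝ))/ε⌋₊ = ⌊((T^[k] y : ℝ))/ε⌋₊ := by
      have := congrFun hxy ⟨k, hk⟩
      simpa [hc] using congrArg Fin.val this
    have hd : dist (T^[k] x) (T^[k] y) < ε := by
      rw [Subtype.dist_eq, Real.dist_eq]
      exact floor_near hε (coe_mem _).1 (coe_mem _).1 heq
    linarith
  calc E.card = (E.image code).card := (Finset.card_image_of_injOn hinj).symm
    _ ≤ Fintype.card (Fin n → Fin K) := by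
        exact le_trans (Finset.card_le_univ _) (le_of_eq (Finset.card_univ))
    _ = K^n := by simp

lemma dynSepNum_set_nonempty (T : XI → XI) (n : ℕ) (ε : ℝ) :
    0 ∈ {m | ∃ E : Finset XI, (∀ x ∈ E, ∀ y ∈ E, x ≠ y → ε < dynDist T n x y) ∧ E.card = m} :=
  ⟨∅, by simp, rfl⟩

lemma dynSepNum_le {T : XI → XI} {n : ℕ} {ε : ℝ} (hε : 0 < ε) :
    dynSepNum T n ε ≤ (⌊1/ε⌋₊ + 1)^n := by
  apply csSup_le ⟨0, dynSepNum_set_nonempty T n ε⟩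
  rintro m ⟨E, hE, rfl⟩
  exact sep_card_le hε hE

lemma le_dynSepNum {T : XI → XI} {n : ℕ} {ε : ℝ} (hε : 0 < ε) {E : Finset XI}
    (hE : ∀ x ∈ E, ∀ y ∈ E, x ≠ y → ε < dynDist T n x y) :
    E.card ≤ dynSepNum T n ε := by
  have hbdd : BddAbove {m | ∃ E : Finset XI,
      (∀ x ∈ E, ∀ y ∈ E, x ≠ y → ε < dynDist T n x y) ∧ E.card = m} := by
    refine ⟨(⌊1/ε⌋₊ + 1)^n, ?_⟩
    rintro m ⟨E', hE', rfl⟩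
    exact sep_card_le hε hE'
  exact le_csSup hbdd ⟨E, hE, rfl⟩

lemma natlog_mono {a b : ℕ} (h : a ≤ b) : Real.log a ≤ Real.log b := by
  rcases Nat.eq_zero_or_pos a with h0 | h0
  · rw [h0]
    simpa using Real.log_natCast_nonneg b
  · exact Real.log_le_log (by exact_mod_cast h0) (by exact_mod_cast h)

lemma ennreal_nat_div (L : ℝ) {n : ℕ} (hn : 0 < n) :
    ENNReal.ofReal ((n:ℝ) * L) / (n : ℝ≥0∞) = ENNReal.ofReal L := by
  rw [ENNReal.ofReal_mul (by positivity), ENNReal.ofReal_natCast]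
  rw [mul_comm, mul_div_assoc, ENNReal.div_self (by exact_mod_cast hn.ne') (by simp), mul_one]

lemma dynS_le {T : XI → XI} {ε : ℝ} (hε : 0 < ε) :
    dynS T ε ≤ ENNReal.ofReal (Real.log ((⌊1/ε⌋₊ + 1 : ℕ) : ℝ)) := by
  apply Filter.limsup_le_of_le (by isBoundedDefault)
  filter_upwards [Filter.eventually_ge_atTop 1] with n hn
  set K : ℕ := ⌊1/ε⌋₊ + 1 with hK
  have h1 : Real.log (dynSepNum T n ε) ≤ (n:ℝ) * Real.log (K:ℝ) := by
    calc Real.log (dynSepNum T n ε) ≤ Real.log ((K^n : ℕ) : ℝ) := natlog_mono (dynSepNum_le hε)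
      _ = (n:ℝ) * Real.log (K:ℝ) := by
          rw [show ((K^n:ℕ):ℝ) = ((K:ℕ):ℝ)^n by push_cast; ring, Real.log_pow]
  calc ENNReal.ofReal (Real.log (dynSepNum T n ε)) / (n : ℝ≥0∞)
      ≤ ENNReal.ofReal ((n:ℝ) * Real.log (K:ℝ)) / (n : ℝ≥0∞) :=
        ENNReal.div_le_div_right (ENNReal.ofReal_le_ofReal h1) _
    _ = ENNReal.ofReal (Real.log (K:ℝ)) := ennreal_nat_div _ hn

lemma le_dynS {T : XI → XI} {ε : ℝ} {D : ℕ}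
    (hD : ∀ n : ℕ, 1 ≤ n → D^n ≤ dynSepNum T n ε) :
    ENNReal.ofReal (Real.log D) ≤ dynS T ε := by
  have h : (fun _ : ℕ => ENNReal.ofReal (Real.log D)) ≤ᶠ[Filter.atTop]
      fun n : ℕ => ENNReal.ofReal (Real.log (dynSepNum T n ε)) / (n : ℝ≥0∞) := by
    filter_upwards [Filter.eventually_ge_atTop 1] with n hn
    have h1 : (n:ℝ) * Real.log D ≤ Real.log (dynSepNum T n ε) := by
      calc (n:ℝ) * Real.log D = Real.log ((D^n : ℕ) : ℝ) := by
            rw [show ((D^n:ℕ):ℝ) = ((D:ℕ):ℝ)^n by push_cast; ring, Real.log_pow]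
        _ ≤ _ := natlog_mono (hD n hn)
    calc ENNReal.ofReal (Real.log D) = ENNReal.ofReal ((n:ℝ) * Real.log D) / (n:ℝ≥0∞) :=
          (ennreal_nat_div _ hn).symm
      _ ≤ _ := ENNReal.div_le_div_right (ENNReal.ofReal_le_ofReal h1) _
  calc ENNReal.ofReal (Real.log D)
      = Filter.limsup (fun _ : ℕ => ENNReal.ofReal (Real.log D)) Filter.atTop :=
        (Filter.limsup_const _).symm
    _ ≤ dynS T ε := Filter.limsup_le_limsup h

end MdimProof

namespace MdimProof

lemma mdim_le_ofReal {T : XI → XI} {r : ℝ} (hr : 1 < r) :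
    mdim T ≤ ENNReal.ofReal r := by
  have hr0 : 0 < r - 1 := by linarith
  set δ : ℝ := min (1/2) (Real.exp (-(Real.log 2)/(r-1))) with hδ
  have hδ0 : 0 < δ := lt_min (by norm_num) (Real.exp_pos _)
  apply Filter.limsup_le_of_le (by isBoundedDefault)
  filter_upwards [Ioo_mem_nhdsGT_of_mem (show (0:ℝ) ∈ Set.Ico 0 δ from ⟨le_refl _, hδ0⟩)]
    with ε hε
  obtain ⟨hε0, hεδ⟩ := hε
  have hε12 : ε ≤ 1/2 := le_of_lt (lt_of_lt_of_le hεδ (min_le_left _ _))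
  have hεe : ε < Real.exp (-(Real.log 2)/(r-1)) := lt_of_lt_of_le hεδ (min_le_right _ _)
  have hlogneg : Real.log ε < 0 := Real.log_neg hε0 (by linarith)
  have habs : |Real.log ε| = -Real.log ε := abs_of_neg hlogneg
  have hlog2 : Real.log ε < -(Real.log 2)/(r-1) := by
    calc Real.log ε < Real.log (Real.exp (-(Real.log 2)/(r-1))) := Real.log_lt_log hε0 hεe
      _ = -(Real.log 2)/(r-1) := Real.log_exp _
  -- key real inequality
  set K : ℕ := ⌊1/ε⌋₊ + 1 with hK
  have hK1 : (1:ℝ) ≤ (K:ℝ) := by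
    rw [hK]; push_cast
    have := Nat.cast_nonneg (α := ℝ) ⌊1/ε⌋₊
    linarith
  have hKle : (K:ℝ) ≤ 2/ε := by
    have h1 : (⌊1/ε⌋₊:ℝ) ≤ 1/ε := Nat.floor_le (by positivity)
    have h2 : (1:ℝ) ≤ 1/ε := by
      rw [le_div_iff₀ hε0]; linarith
    rw [hK]; push_cast
    have : 2/ε = 1/ε + 1/ε := by ring
    linarith
  have hreal : Real.log (K:ℝ) ≤ r * |Real.log ε| := by
    have h3 : Real.log (K:ℝ) ≤ Real.log (2/ε) := Real.log_le_log (by linarith) hKle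
    have h4 : Real.log (2/ε) = Real.log 2 - Real.log ε := Real.log_div (by norm_num) hε0.ne'
    have h5 : Real.log 2 ≤ (r-1) * (-Real.log ε) := by
      have h6 : Real.log 2 / (r-1) ≤ -Real.log ε := by
        have hneg : -Real.log 2/(r-1) = -(Real.log 2/(r-1)) := by ring
        linarith [hlog2]
      calc Real.log 2 = (r-1) * (Real.log 2/(r-1)) := by field_simp
        _ ≤ (r-1) * (-Real.log ε) := by
            apply mul_le_mul_of_nonneg_left h6 hr0.le
      -- done
    rw [habs]
    nlinarith [h3, h4, h5]
  calc dynS T ε / ENNReal.ofReal |Real.log ε|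
      ≤ ENNReal.ofReal (Real.log (K:ℝ)) / ENNReal.ofReal |Real.log ε| :=
        ENNReal.div_le_div_right (dynS_le hε0) _
    _ ≤ ENNReal.ofReal r := by
        apply ENNReal.div_le_of_le_mul
        rw [← ENNReal.ofReal_mul (by linarith)]
        exact ENNReal.ofReal_le_ofReal hreal

lemma mdim_le_one (T : XI → XI) : mdim T ≤ 1 := by
  apply ENNReal.le_of_forall_pos_le_add
  intro ε hε _
  have hε' : (0:ℝ) < (ε:ℝ) := hε
  have h := mdim_le_ofReal (T := T) (r := 1 + (ε:ℝ)) (by linarith)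
  calc mdim T ≤ ENNReal.ofReal (1 + (ε:ℝ)) := h
    _ = 1 + (ε : ℝ≥0∞) := by
        rw [ENNReal.ofReal_add (by norm_num) (NNReal.coe_nonneg ε), ENNReal.ofReal_one,
          ENNReal.ofReal_coe_nnreal]

end MdimProof

namespace MdimProof

section Lower

variable {G : XI → XI} {c ρ : ℝ}

/-- the conjugated point `c + ρ t` of the window -/
def pt (c ρ : ℝ) (hc : 0 ≤ c) (hρ : 0 < ρ) (hcρ : c + ρ ≤ 1) (t : ℝ) (ht : t ∈ Set.Icc (0:ℝ) 1) : XI :=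
  ⟨c + ρ * t, ⟨by nlinarith [ht.1], by nlinarith [ht.2]⟩⟩

lemma G_pt (hc : 0 ≤ c) (hρ : 0 < ρ) (hcρ : c + ρ ≤ 1)
    (hG : ∀ x : XI, (x:ℝ) ∈ Set.Icc c (c+ρ) → ((G x : ℝ)) = c + ρ * gg (((x:ℝ) - c)/ρ)) {t : ℝ} (ht : t ∈ Set.Icc (0:ℝ) 1) :
    G (pt c ρ hc hρ hcρ t ht) = pt c ρ hc hρ hcρ (gg t) (gg_maps ht) := by
  apply Subtype.ext
  have hmem : ((pt c ρ hc hρ hcρ t ht : XI) : ℝ) ∈ Set.Icc c (c+ρ) := by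
    constructor
    · simp only [pt]; nlinarith [ht.1]
    · simp only [pt]; nlinarith [ht.2]
  rw [hG _ hmem]
  simp only [pt]
  congr 1
  congr 1
  rw [add_sub_cancel_left, mul_comm, mul_div_assoc, div_self hρ.ne', mul_one]

/-- digits from a tuple -/
def dig {n : ℕ} {D : ℕ} (s : Fin n → Fin D) : ℕ → ℕ :=
  fun i => if h : i < n then 2 * (s ⟨i, h⟩ : ℕ) else 0

lemma dig_even {n D : ℕ} (s : Fin n → Fin D) (i : ℕ) : Even (dig s i) := by
  unfold dig
  split
  · exact ⟨(s ⟨i, by assumption⟩ : ℕ), by ring⟩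
  · exact ⟨0, rfl⟩

lemma dig_le {n : ℕ} {j : ℕ} (s : Fin n → Fin (2^(j^2)+1)) (i : ℕ) :
    ((dig s i : ℕ) : ℝ) ≤ (mJ j : ℝ) - 1 := by
  have hm : (mJ j : ℕ) = 2^(j^2+1)+1 := rfl
  have hsb : dig s i ≤ 2^(j^2+1) := by
    unfold dig
    split
    · have := (s ⟨i, by assumption⟩).2
      have h2 : (s ⟨i, by assumption⟩ : ℕ) ≤ 2^(j^2) := by omega
      calc 2 * (s ⟨i, by assumption⟩ : ℕ) ≤ 2 * 2^(j^2) := by omega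
        _ = 2^(j^2+1) := by rw [pow_succ]; ring
    · positivity
  have : (dig s i : ℝ) ≤ ((2^(j^2+1) : ℕ) : ℝ) := by exact_mod_cast hsb
  have h3 : ((mJ j : ℕ):ℝ) = ((2^(j^2+1):ℕ):ℝ) + 1 := by rw [hm]; push_cast; ring
  linarith

lemma dig_zero {n D : ℕ} (s : Fin n → Fin D) (i : ℕ) (h : n ≤ i) : dig s i = 0 := by
  unfold dig
  split
  · omega
  · rfl

lemma yy_dig_mem {n j : ℕ} (s : Fin n → Fin (2^(j^2)+1)) (k : ℕ) :
    yy (mJ j) n (dig s) k ∈ Set.Icc (0:ℝ) 1 := yy_mem (dig_le s) k (mJ_ge_two j)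

lemma pt_arg_mem {n j : ℕ} (s : Fin n → Fin (2^(j^2)+1)) (k : ℕ) :
    aJ j + lJ j * yy (mJ j) n (dig s) k ∈ Set.Icc (0:ℝ) 1 := by
  have h1 := yy_dig_mem s k
  have h2 := aJ_nonneg j
  have h3 := lJ_pos j
  have h4 := aJ_add_lJ_le_one j
  constructor
  · nlinarith [h1.1]
  · nlinarith [h1.2]

/-- the separated points -/
def Ppt (hc : 0 ≤ c) (hρ : 0 < ρ) (hcρ : c + ρ ≤ 1) {n j : ℕ}
    (s : Fin n → Fin (2^(j^2)+1)) (k : ℕ) : XI :=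
  pt c ρ hc hρ hcρ _ (pt_arg_mem s k)

variable (hc : 0 ≤ c) (hρ : 0 < ρ) (hcρ : c + ρ ≤ 1)
variable (hG : ∀ x : XI, (x:ℝ) ∈ Set.Icc c (c+ρ) → ((G x : ℝ)) = c + ρ * gg (((x:ℝ) - c)/ρ))

include hc hρ hcρ hG in
lemma G_iter {n j : ℕ} (s : Fin n → Fin (2^(j^2)+1)) (k : ℕ) :
    G^[k] (Ppt hc hρ hcρ s 0) = Ppt hc hρ hcρ s k := by
  induction k with
  | zero => rfl
  | succ k ih =>
    rw [Function.iterate_succ_apply', ih]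
    unfold Ppt
    rw [G_pt hc hρ hcρ hG (pt_arg_mem s k)]
    apply Subtype.ext
    simp only [pt]
    congr 1
    congr 1
    rw [gg_eval (yy_dig_mem s k), yy_step (dig_even s) (dig_le s) (dig_zero s) k (mJ_ge_two j)]

omit hG in
lemma Ppt_dist {n j : ℕ} (s s' : Fin n → Fin (2^(j^2)+1)) {k : ℕ} (hk : dig s k ≠ dig s' k) :
    ρ * lJ j / (mJ j) ≤ dist (Ppt hc hρ hcρ s k) (Ppt hc hρ hcρ s' k) := by
  rw [Subtype.dist_eq, Real.dist_eq]
  simp only [Ppt, pt]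
  have hsep := yy_sep (dig_even s) (dig_le s) (dig_zero s)
    (dig_even s') (dig_le s') (dig_zero s') hk (mJ_ge_two j)
  have hm0 : (0:ℝ) < mJ j := by linarith [mJ_ge_two j]
  have e : c + ρ * (aJ j + lJ j * yy (mJ j) n (dig s) k)
      - (c + ρ * (aJ j + lJ j * yy (mJ j) n (dig s') k))
      = (ρ * lJ j) * (yy (mJ j) n (dig s) k - yy (mJ j) n (dig s') k) := by ring
  rw [e, abs_mul, abs_of_pos (mul_pos hρ (lJ_pos j))]
  calc ρ * lJ j / (mJ j) = (ρ * lJ j) * (1/(mJ j)) := by ring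
    _ ≤ (ρ * lJ j) * |yy (mJ j) n (dig s) k - yy (mJ j) n (dig s') k| := by
        apply mul_le_mul_of_nonneg_left hsep (mul_pos hρ (lJ_pos j)).le

include hc hρ hcρ hG in
lemma Ppt_inj {n j : ℕ} : Function.Injective (fun s : Fin n → Fin (2^(j^2)+1) => Ppt (c := c) (ρ := ρ) hc hρ hcρ s 0) := by
  intro s s' hss
  by_contra hne
  obtain ⟨i, hi⟩ := Function.ne_iff.1 hne
  have hd : dig s (i:ℕ) ≠ dig s' (i:ℕ) := by
    unfold dig
    rw [dif_pos i.2, dif_pos i.2]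
    simp only [Fin.eta]
    intro h
    exact hi (Fin.ext (by omega))
  have h1 : G^[(i:ℕ)] (Ppt hc hρ hcρ s 0) = G^[(i:ℕ)] (Ppt hc hρ hcρ s' 0) :=
    congrArg _ hss
  rw [G_iter hc hρ hcρ hG, G_iter hc hρ hcρ hG] at h1
  have h2 := Ppt_dist hc hρ hcρ s s' hd
  rw [h1, dist_self] at h2
  have hm0 : (0:ℝ) < mJ j := by linarith [mJ_ge_two j]
  have : (0:ℝ) < ρ * lJ j / mJ j := div_pos (mul_pos hρ (lJ_pos j)) hm0
  linarith

include hc hρ hcρ hG in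
lemma lower_sepnum {n j : ℕ} (hn : 1 ≤ n) {ε : ℝ} (hε0 : 0 < ε)
    (hε : ε < ρ * lJ j / mJ j) :
    (2^(j^2)+1)^n ≤ dynSepNum G n ε := by
  classical
  set E : Finset XI := Finset.image (fun s : Fin n → Fin (2^(j^2)+1) => Ppt (c := c) (ρ := ρ) hc hρ hcρ s 0) Finset.univ with hE
  have hcard : E.card = (2^(j^2)+1)^n := by
    rw [hE, Finset.card_image_of_injective _ (Ppt_inj hc hρ hcρ hG), Finset.card_univ]
    simp [Fintype.card_fun]
  have hsep : ∀ x ∈ E, ∀ y ∈ E, x ≠ y → ε < dynDist G n x y := by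
    intro x hx y hy hxy
    rw [hE, Finset.mem_image] at hx hy
    obtain ⟨s, -, rfl⟩ := hx
    obtain ⟨s', -, rfl⟩ := hy
    have hne : s ≠ s' := fun h => hxy (by rw [h])
    obtain ⟨i, hi⟩ := Function.ne_iff.1 hne
    have hd : dig s (i:ℕ) ≠ dig s' (i:ℕ) := by
      unfold dig
      rw [dif_pos i.2, dif_pos i.2]
      simp only [Fin.eta]
      intro h
      exact hi (Fin.ext (by omega))
    calc ε < ρ * lJ j / mJ j := hε
      _ ≤ dist (Ppt hc hρ hcρ s (i:ℕ)) (Ppt hc hρ hcρ s' (i:ℕ)) := Ppt_dist hc hρ hcρ s s' hd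
      _ = dist (G^[(i:ℕ)] (Ppt hc hρ hcρ s 0)) (G^[(i:ℕ)] (Ppt hc hρ hcρ s' 0)) := by
          rw [G_iter hc hρ hcρ hG, G_iter hc hρ hcρ hG]
      _ ≤ dynDist G n _ _ := dist_le_dynDist i.2 _ _
  calc (2^(j^2)+1)^n = E.card := hcard.symm
    _ ≤ dynSepNum G n ε := le_dynSepNum hε0 hsep

include hc hρ hcρ hG in
lemma one_le_mdim : 1 ≤ mdim G := by
  have hρ1 : ρ ≤ 1 := by linarith
  have hl2 : 0 < Real.log 2 := Real.log_pos one_lt_two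
  set l2 := Real.log 2 with hl2def
  set L : ℝ := -Real.log ρ with hLdef
  have hL0 : 0 ≤ L := by
    have := Real.log_nonpos hρ.le hρ1
    rw [hLdef]; linarith
  have hm0 : ∀ j : ℕ, (0:ℝ) < mJ j := fun j => by linarith [mJ_ge_two j]
  set εj : ℕ → ℝ := fun j => ρ * lJ j / (2 * mJ j) with hεjdef
  have hεpos : ∀ j, 0 < εj j := fun j => div_pos (mul_pos hρ (lJ_pos j)) (by linarith [hm0 j])
  have hεlt : ∀ j, εj j < ρ * lJ j / mJ j := fun j =>
    div_lt_div_of_pos_left (mul_pos hρ (lJ_pos j)) (hm0 j) (by linarith [hm0 j])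
  have hεle : ∀ j, εj j ≤ ρ * lJ j := fun j =>
    div_le_self (mul_pos hρ (lJ_pos j)).le (by linarith [mJ_ge_two j])
  have hlJle : ∀ j, lJ j ≤ 1/2 := by
    intro j
    unfold lJ
    calc (1/2:ℝ)^(j+1) ≤ (1/2:ℝ)^1 := pow_le_pow_of_le_one (by norm_num) (by norm_num) (by omega)
      _ = 1/2 := pow_one _
  have hεsmall : ∀ j, εj j < 1 := by
    intro j
    have := hεle j
    have h2 := hlJle j
    nlinarith [hεpos j, hρ, lJ_pos j]
  have htendaux : Filter.Tendsto (fun j : ℕ => ρ * lJ j) Filter.atTop (nhds 0) := by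
    have h1 : Filter.Tendsto (fun j : ℕ => (1/2:ℝ)^j) Filter.atTop (nhds 0) :=
      tendsto_pow_atTop_nhds_zero_of_lt_one (by norm_num) (by norm_num)
    have h2 := h1.const_mul (ρ/2)
    rw [mul_zero] at h2
    apply h2.congr
    intro j
    unfold lJ
    rw [pow_succ]
    ring
  have htend0 : Filter.Tendsto εj Filter.atTop (nhds 0) :=
    squeeze_zero (fun j => (hεpos j).le) hεle htendaux
  have htend : Filter.Tendsto εj Filter.atTop (nhdsWithin 0 (Set.Ioi 0)) :=
    tendsto_nhdsWithin_of_tendsto_nhds_of_eventually_within _ htend0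
      (Filter.Eventually.of_forall (fun j => hεpos j))
  -- log of number of digits
  have hDlog : ∀ j : ℕ, ((j:ℝ)^2) * l2 ≤ Real.log ((2^(j^2)+1 : ℕ):ℝ) := by
    intro j
    have h1 : Real.log ((2^(j^2) : ℕ):ℝ) ≤ Real.log ((2^(j^2)+1 : ℕ):ℝ) :=
      natlog_mono (by omega)
    have h2 : Real.log ((2^(j^2) : ℕ):ℝ) = ((j^2 : ℕ):ℝ) * l2 := by
      rw [show ((2^(j^2) : ℕ):ℝ) = (2:ℝ)^(j^2) by push_cast; ring, Real.log_pow, hl2def]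
    rw [h2] at h1
    calc ((j:ℝ)^2) * l2 = ((j^2:ℕ):ℝ) * l2 := by push_cast; ring
      _ ≤ _ := h1
  -- bound on |log εj|
  have hmJle : ∀ j : ℕ, (mJ j : ℝ) ≤ (2:ℝ)^(j^2+2) := by
    intro j
    have h1 : (mJ j : ℕ) ≤ 2^(j^2+2) := by
      have h2 : (2:ℕ)^(j^2+1) + 1 ≤ 2^(j^2+1) + 2^(j^2+1) := by
        have := Nat.one_le_two_pow (n := j^2+1); omega
      have h3 : (2:ℕ)^(j^2+1) + 2^(j^2+1) = 2^(j^2+2) := by rw [pow_succ]; ring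
      calc (mJ j : ℕ) = 2^(j^2+1)+1 := rfl
        _ ≤ _ := h2.trans h3.le
    exact_mod_cast h1
  have hεinv : ∀ j : ℕ, (εj j)⁻¹ ≤ (2:ℝ)^(j^2+j+4)/ρ := by
    intro j
    have hlj : lJ j = ((2:ℝ)^(j+1))⁻¹ := by
      unfold lJ
      rw [one_div, inv_pow]
    have he : (εj j)⁻¹ = 2 * mJ j * (2:ℝ)^(j+1) / ρ := by
      rw [hεjdef]
      simp only
      rw [hlj]
      have hp : (0:ℝ) < (2:ℝ)^(j+1) := by positivity
      field_simp
    rw [he]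
    gcongr
    calc 2 * (mJ j:ℝ) * 2^(j+1) ≤ 2 * (2:ℝ)^(j^2+2) * 2^(j+1) := by
          have := hmJle j
          nlinarith [pow_pos (show (0:ℝ) < 2 by norm_num) (j+1)]
      _ = (2:ℝ)^(j^2+j+4) := by
          rw [show (2:ℝ)*(2:ℝ)^(j^2+2)*(2:ℝ)^(j+1) = (2:ℝ)^((j^2+2)+(j+1)+1) by
            rw [pow_add, pow_add, pow_one]; ring]
          congr 1
          omega
  have hlogε : ∀ j : ℕ, |Real.log (εj j)| ≤ ((j:ℝ)^2 + j + 4) * l2 + L := by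
    intro j
    have hlogneg : Real.log (εj j) < 0 := Real.log_neg (hεpos j) (hεsmall j)
    rw [abs_of_neg hlogneg, ← Real.log_inv]
    have h1 : Real.log (εj j)⁻¹ ≤ Real.log ((2:ℝ)^(j^2+j+4)/ρ) :=
      Real.log_le_log (inv_pos.2 (hεpos j)) (hεinv j)
    have h2 : Real.log ((2:ℝ)^(j^2+j+4)/ρ) = ((j^2+j+4 : ℕ):ℝ) * l2 + L := by
      rw [Real.log_div (by positivity) hρ.ne', Real.log_pow, hLdef, hl2def]
      ring
    rw [h2] at h1
    calc Real.log (εj j)⁻¹ ≤ ((j^2+j+4 : ℕ):ℝ) * l2 + L := h1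
      _ = ((j:ℝ)^2 + j + 4) * l2 + L := by push_cast; ring
  -- main frequently bound
  have hmain : ∀ c' : ℝ≥0∞, c' < 1 → c' ≤ mdim G := by
    intro c' hc'
    have hne : c' ≠ ⊤ := (hc'.trans_le le_top).ne
    set r := c'.toReal with hrdef
    have hr0 : 0 ≤ r := ENNReal.toReal_nonneg
    have hr1 : r < 1 := by
      have := (ENNReal.toReal_lt_toReal hne ENNReal.one_ne_top).2 hc'
      rwa [ENNReal.toReal_one] at this
    have hkey : ∀ᶠ j : ℕ in Filter.atTop,
        r * (((j:ℝ)^2 + j + 4) * l2 + L) ≤ (j:ℝ)^2 * l2 := by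
      have hpos : (0:ℝ) < (1-r)*l2 := mul_pos (by linarith) hl2
      set C : ℝ := (r*l2 + 4*l2 + L + 1)/((1-r)*l2) with hCdef
      filter_upwards [Filter.eventually_ge_atTop 1,
        tendsto_natCast_atTop_atTop.eventually_ge_atTop C] with j hj1 hjC
      have hj1' : (1:ℝ) ≤ (j:ℝ) := by exact_mod_cast hj1
      have e1 : ((1-r)*l2) * C = r*l2 + 4*l2 + L + 1 := by
        rw [hCdef]
        field_simp
        exact div_self (sub_pos.2 hr1).ne'
      have e2 : r*l2 + 4*l2 + L + 1 ≤ ((1-r)*l2) * (j:ℝ) := by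
        calc r*l2 + 4*l2 + L + 1 = ((1-r)*l2) * C := e1.symm
          _ ≤ ((1-r)*l2) * (j:ℝ) := mul_le_mul_of_nonneg_left hjC hpos.le
      have P1 : (r*l2 + 4*l2 + L + 1) * (j:ℝ) ≤ (((1-r)*l2) * (j:ℝ)) * (j:ℝ) :=
        mul_le_mul_of_nonneg_right e2 (by linarith)
      have P2 : (4*l2 + L + 1) * 1 ≤ (4*l2 + L + 1) * (j:ℝ) :=
        mul_le_mul_of_nonneg_left hj1' (by nlinarith)
      have P3 : 4*r*l2 + r*L ≤ 4*l2 + L := by nlinarith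
      nlinarith [P1, P2, P3]
    have hev : ∀ᶠ j : ℕ in Filter.atTop,
        c' ≤ dynS G (εj j) / ENNReal.ofReal |Real.log (εj j)| := by
      filter_upwards [hkey] with j hkeyj
      have hlogpos : 0 < |Real.log (εj j)| :=
        abs_pos.2 (ne_of_lt (Real.log_neg (hεpos j) (hεsmall j)))
      have hd0 : ENNReal.ofReal |Real.log (εj j)| ≠ 0 := by
        simp only [ne_eq, ENNReal.ofReal_eq_zero, not_le]
        exact hlogpos
      have hdt : ENNReal.ofReal |Real.log (εj j)| ≠ ⊤ := ENNReal.ofReal_ne_top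
      rw [show c' = ENNReal.ofReal r from (ENNReal.ofReal_toReal hne).symm]
      rw [ENNReal.le_div_iff_mul_le (Or.inl hd0) (Or.inl hdt)]
      have hDle : ENNReal.ofReal (Real.log ((2^(j^2)+1 : ℕ):ℝ)) ≤ dynS G (εj j) := by
        apply le_dynS
        intro n hn
        exact lower_sepnum hc hρ hcρ hG hn (hεpos j) (hεlt j)
      calc ENNReal.ofReal r * ENNReal.ofReal |Real.log (εj j)|
          = ENNReal.ofReal (r * |Real.log (εj j)|) := (ENNReal.ofReal_mul hr0).symm
        _ ≤ ENNReal.ofReal (Real.log ((2^(j^2)+1 : ℕ):ℝ)) := by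
            apply ENNReal.ofReal_le_ofReal
            calc r * |Real.log (εj j)| ≤ r * (((j:ℝ)^2 + j + 4) * l2 + L) :=
                  mul_le_mul_of_nonneg_left (hlogε j) hr0
              _ ≤ (j:ℝ)^2 * l2 := hkeyj
              _ ≤ _ := hDlog j
        _ ≤ dynS G (εj j) := hDle
    exact le_limsup_of_frequently_le' (htend.frequently hev.frequently)
  by_contra hcon
  push_neg at hcon
  obtain ⟨c', h1, h2⟩ := exists_between hcon
  exact absurd (hmain c' h2) (not_le.2 h1)

end Lower

end MdimProof

namespace MdimProof

def Freal (F : C(XI, XI)) : ℝ → ℝ :=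
  fun x => ((F (Set.projIcc 0 1 (by norm_num) x)) : ℝ)

lemma Freal_cont (F : C(XI, XI)) : Continuous (Freal F) :=
  continuous_subtype_val.comp (F.continuous.comp continuous_projIcc)

lemma Freal_mem (F : C(XI, XI)) (x : ℝ) : Freal F x ∈ Set.Icc (0:ℝ) 1 := (F _).2

lemma Freal_eq (F : C(XI, XI)) (x : XI) : Freal F (x:ℝ) = (F x : ℝ) := by
  unfold Freal
  congr 1
  rw [Set.projIcc_of_mem _ x.2]

lemma exists_fixed (F : C(XI, XI)) : ∃ p ∈ Set.Icc (0:ℝ) 1, Freal F p = p := by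
  set h : ℝ → ℝ := fun x => Freal F x - x with hh
  have hcont : ContinuousOn h (Set.Icc 0 1) :=
    ((Freal_cont F).sub continuous_id).continuousOn
  have h0 : 0 ≤ h 0 := by
    simp only [hh]
    have := (Freal_mem F 0).1
    linarith
  have h1 : h 1 ≤ 0 := by
    simp only [hh]
    have := (Freal_mem F 1).2
    linarith
  have := intermediate_value_Icc' (by norm_num : (0:ℝ) ≤ 1) hcont
  obtain ⟨p, hp, hp0⟩ := this (Set.mem_Icc.2 ⟨h1, h0⟩)
  refine ⟨p, hp, ?_⟩
  simp only [hh] at hp0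
  linarith

lemma seg_mem {a b τ lo hi : ℝ} (h0 : 0 ≤ τ) (h1 : τ ≤ 1)
    (ha1 : lo ≤ a) (ha2 : a ≤ hi) (hb1 : lo ≤ b) (hb2 : b ≤ hi) :
    lo ≤ a + τ*(b-a) ∧ a + τ*(b-a) ≤ hi :=
  ⟨by nlinarith, by nlinarith⟩

set_option maxHeartbeats 2000000 in
lemma construct (F : C(XI,XI)) {η : ℝ} (hη : 0 < η) :
    ∃ G : C(XI,XI), dist F G ≤ η ∧ mdim (⇑G) = 1 := by
  obtain ⟨p, hp, hfix⟩ := exists_fixed F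
  obtain ⟨δ, hδ0, hδ⟩ := Metric.continuousAt_iff.1 (Freal_cont F).continuousAt (η/2) (by positivity)
  rw [hfix] at hδ
  set r : ℝ := min (min (δ/2) (η/4)) (1/4) with hrdef
  have hr0 : 0 < r := lt_min (lt_min (by positivity) (by positivity)) (by norm_num)
  have hrδ : r < δ := lt_of_le_of_lt ((min_le_left _ _).trans (min_le_left _ _)) (by linarith)
  have hrη : r ≤ η/4 := (min_le_left _ _).trans (min_le_right _ _)
  have hr14 : r ≤ 1/4 := min_le_right _ _
  set u : ℝ := if p ≤ 1/2 then p else p - r with hudef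
  have hu0 : 0 ≤ u := by
    rw [hudef]
    split
    · exact hp.1
    · push_neg at *
      linarith
  have hur1 : u + r ≤ 1 := by
    rw [hudef]
    split
    · linarith
    · linarith [hp.2]
  have hwin : ∀ y, u ≤ y → y ≤ u + r → |y - p| ≤ r := by
    intro y hy1 hy2
    rw [abs_le]
    rw [hudef] at hy1 hy2
    split at hy1 <;> split at hy2 <;> constructor <;> linarith
  have hFwin : ∀ y, u ≤ y → y ≤ u + r → |Freal F y - p| ≤ η/2 := by
    intro y hy1 hy2
    have h1 := hwin y hy1 hy2
    have h2 : dist y p < δ := by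
      rw [Real.dist_eq]
      have h1' := abs_le.1 h1
      rw [abs_lt]
      constructor <;> [linarith [h1'.1]; linarith [h1'.2]]
    exact le_of_lt (by simpa [Real.dist_eq] using hδ h2)
  set c1 : ℝ := u + r/4 with hc1def
  set ρ2 : ℝ := r/2 with hρ2def
  set c2 : ℝ := u + 3*r/4 with hc2def
  have hρ20 : 0 < ρ2 := by rw [hρ2def]; linarith
  have hc10 : 0 ≤ c1 := by rw [hc1def]; linarith
  have hc1ρ2 : c1 + ρ2 = c2 := by rw [hc1def, hρ2def, hc2def]; ring
  have hc2r : c1 + ρ2 ≤ 1 := by rw [hc1ρ2, hc2def]; linarith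
  -- the four pieces
  set lin1 : ℝ → ℝ := fun x => Freal F u + ((x - u)/(r/4)) * (c1 - Freal F u) with hlin1
  set gad : ℝ → ℝ := fun x => c1 + ρ2 * gg ((x - c1)/ρ2) with hgad
  set lin2 : ℝ → ℝ := fun x => Freal F (u+r) + ((u + r - x)/(r/4)) * (c2 - Freal F (u+r)) with hlin2
  set Gr : ℝ → ℝ := fun x =>
    if x ≤ u then Freal F x
    else if x ≤ c1 then lin1 x
    else if x ≤ c2 then gad x
    else if x ≤ u + r then lin2 x
    else Freal F x with hGr
  -- boundary values
  have hlin1u : lin1 u = Freal F u := by simp [hlin1]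
  have hlin1c1 : lin1 c1 = c1 := by
    simp only [hlin1, hc1def]
    field_simp
    ring
  have hgadc1 : gad c1 = c1 := by
    simp [hgad, gg_zero]
  have hgadc2 : gad c2 = c2 := by
    simp only [hgad]
    have harg : (c2 - c1)/ρ2 = 1 := by
      simp only [hc2def, hc1def, hρ2def]
      field_simp
      ring
    rw [harg, gg_one]
    simp only [hc2def, hc1def, hρ2def]
    ring
  have hlin2c2 : lin2 c2 = c2 := by
    simp only [hlin2, hc2def]
    have harg : (u + r - (u + 3*r/4))/(r/4) = 1 := by
      field_simp
      ring
    rw [harg]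
    ring
  have hlin2ur : lin2 (u+r) = Freal F (u+r) := by simp [hlin2]
  -- continuity
  have hGrcont : Continuous Gr := by
    have hl1 : Continuous lin1 := by
      simp only [hlin1]
      fun_prop
    have hl2c : Continuous lin2 := by
      simp only [hlin2]
      fun_prop
    have hgc : Continuous gad := by
      simp only [hgad]
      exact continuous_const.add (continuous_const.mul (gg_cont.comp (by fun_prop)))
    have h4 : Continuous (fun x => if x ≤ u + r then lin2 x else Freal F x) := by
      apply Continuous.if_le hl2c (Freal_cont F) continuous_id continuous_const
      intro x hx
      simp only [id_eq] at hx
      rw [hx, hlin2ur]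
    have h3 : Continuous (fun x => if x ≤ c2 then gad x else
        if x ≤ u + r then lin2 x else Freal F x) := by
      apply Continuous.if_le hgc h4 continuous_id continuous_const
      intro x hx
      simp only [id_eq] at hx
      rw [hx, hgadc2, if_pos (show c2 ≤ u + r by rw [hc2def]; linarith), hlin2c2]
    have h2 : Continuous (fun x => if x ≤ c1 then lin1 x else
        if x ≤ c2 then gad x else if x ≤ u + r then lin2 x else Freal F x) := by
      apply Continuous.if_le hl1 h3 continuous_id continuous_const
      intro x hx
      simp only [id_eq] at hx
      rw [hx, hlin1c1, if_pos (show c1 ≤ c2 by rw [hc1def, hc2def]; linarith), hgadc1]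
    rw [hGr]
    apply Continuous.if_le (Freal_cont F) h2 continuous_id continuous_const
    intro x hx
    simp only [id_eq] at hx
    rw [hx, if_pos (show u ≤ c1 by rw [hc1def]; linarith), hlin1u]
  clear_value r u c1 ρ2 c2 lin1 gad lin2 Gr
  -- pointwise bounds
  have hmain : ∀ x : ℝ, x ∈ Set.Icc (0:ℝ) 1 → Gr x ∈ Set.Icc (0:ℝ) 1 ∧ |Gr x - Freal F x| ≤ η := by
    intro x hx
    have hFu := hFwin u (le_refl _) (by linarith)
    have hFur := hFwin (u+r) (by linarith) (le_refl _)
    have hFumem := Freal_mem F u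
    have hFurmem := Freal_mem F (u+r)
    have hFxmem := Freal_mem F x
    rw [hGr]
    simp only
    split_ifs with h1 h2 h3 h4
    · exact ⟨Freal_mem F x, by rw [sub_self, abs_zero]; linarith⟩
    · -- u < x ≤ c1
      push_neg at h1
      simp only [hlin1]
      have hτ0 : 0 ≤ (x - u)/(r/4) := div_nonneg (by linarith) (by linarith)
      have hτ1 : (x - u)/(r/4) ≤ 1 := by
        rw [div_le_one (by linarith : (0:ℝ) < r/4)]
        rw [hc1def] at h2
        linarith
      have hc1w : |c1 - p| ≤ r := hwin c1 (by rw [hc1def]; linarith) (by rw [hc1def]; linarith)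
      have hFx : |Freal F x - p| ≤ η/2 := hFwin x h1.le (by rw [hc1def] at h2; linarith)
      have hm1 := seg_mem hτ0 hτ1 hFumem.1 hFumem.2 hc10 (by linarith : c1 ≤ 1)
      obtain ⟨ha1, ha2⟩ := abs_le.1 hFu
      obtain ⟨hb1, hb2⟩ := abs_le.1 hc1w
      have hm2 := seg_mem hτ0 hτ1 (show p - η/2 ≤ Freal F u by linarith)
        (show Freal F u ≤ p + η/2 by linarith)
        (show p - η/2 ≤ c1 by linarith) (show c1 ≤ p + η/2 by linarith)
      constructor
      · exact ⟨hm1.1, hm1.2⟩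
      · obtain ⟨hd1, hd2⟩ := abs_le.1 hFx
        rw [abs_le]
        constructor <;> [linarith [hm2.1, hm2.2]; linarith [hm2.1, hm2.2]]
    · -- c1 < x ≤ c2
      push_neg at h1 h2
      have ht0 : 0 ≤ (x - c1)/ρ2 := div_nonneg (by linarith) hρ20.le
      have ht1 : (x - c1)/ρ2 ≤ 1 := by
        rw [div_le_one hρ20]
        linarith [hc1ρ2]
      have hggm := gg_maps ⟨ht0, ht1⟩
      have hval1 : c1 ≤ gad x := by
        simp only [hgad]
        nlinarith [hggm.1]
      have hval2 : gad x ≤ c2 := by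
        simp only [hgad]
        rw [← hc1ρ2]
        nlinarith [hggm.2]
      have hc1w : |c1 - p| ≤ r := hwin c1 (by rw [hc1def]; linarith) (by rw [hc1def]; linarith)
      have hc2w : |c2 - p| ≤ r := hwin c2 (by rw [hc2def]; linarith) (by rw [hc2def]; linarith)
      have hFx : |Freal F x - p| ≤ η/2 := hFwin x (by rw [hc1def] at h2; linarith)
        (by rw [hc2def] at h3; linarith)
      obtain ⟨ha1, ha2⟩ := abs_le.1 hc1w
      obtain ⟨hb1, hb2⟩ := abs_le.1 hc2w
      obtain ⟨hd1, hd2⟩ := abs_le.1 hFx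
      constructor
      · constructor
        · linarith [hc10]
        · rw [hc2def] at hval2; linarith
      · rw [abs_le]
        constructor <;> linarith
    · -- c2 < x ≤ u + r
      push_neg at h1 h2 h3
      simp only [hlin2]
      have hτ0 : 0 ≤ (u + r - x)/(r/4) := div_nonneg (by linarith) (by linarith)
      have hτ1 : (u + r - x)/(r/4) ≤ 1 := by
        rw [div_le_one (by linarith : (0:ℝ) < r/4)]
        rw [hc2def] at h3
        linarith
      have hc2w : |c2 - p| ≤ r := hwin c2 (by rw [hc2def]; linarith) (by rw [hc2def]; linarith)
      have hFx : |Freal F x - p| ≤ η/2 := hFwin x (by rw [hc2def] at h3; linarith) h4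
      have hm1 := seg_mem hτ0 hτ1 hFurmem.1 hFurmem.2
        (show (0:ℝ) ≤ c2 by rw [hc2def]; linarith) (show c2 ≤ 1 by rw [hc2def]; linarith)
      obtain ⟨ha1, ha2⟩ := abs_le.1 hFur
      obtain ⟨hb1, hb2⟩ := abs_le.1 hc2w
      have hm2 := seg_mem hτ0 hτ1 (show p - η/2 ≤ Freal F (u+r) by linarith)
        (show Freal F (u+r) ≤ p + η/2 by linarith)
        (show p - η/2 ≤ c2 by linarith) (show c2 ≤ p + η/2 by linarith)
      constructor
      · exact ⟨hm1.1, hm1.2⟩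
      · obtain ⟨hd1, hd2⟩ := abs_le.1 hFx
        rw [abs_le]
        constructor <;> linarith [hm2.1, hm2.2]
    · exact ⟨Freal_mem F x, by rw [sub_self, abs_zero]; linarith⟩
  -- bundle
  set G : C(XI, XI) := ⟨fun x => ⟨Gr (x:ℝ), (hmain _ x.2).1⟩,
    (hGrcont.comp continuous_subtype_val).subtype_mk _⟩ with hGdef
  have hGcoe : ∀ x : XI, (G x : ℝ) = Gr (x:ℝ) := fun x => rfl
  refine ⟨G, ?_, ?_⟩
  · -- distance
    apply ContinuousMap.dist_le hη.le |>.2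
    intro x
    rw [Subtype.dist_eq, hGcoe, ← Freal_eq, Real.dist_eq]
    have := (hmain (x:ℝ) x.2).2
    rw [abs_sub_comm] at this
    exact this
  · -- mdim
    have hwinG : ∀ x : XI, (x:ℝ) ∈ Set.Icc c1 (c1+ρ2) →
        ((G x : ℝ)) = c1 + ρ2 * gg (((x:ℝ) - c1)/ρ2) := by
      intro x hxm
      rw [hGcoe, hGr]
      simp only
      obtain ⟨hx1, hx2⟩ := hxm
      rw [hc1ρ2] at hx2
      rcases eq_or_lt_of_le hx1 with heq | hlt
      · rw [if_neg (show ¬((x:ℝ) ≤ u) by push_neg; rw [hc1def] at hx1; linarith),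
          if_pos (le_of_eq heq.symm)]
        have : lin1 (x:ℝ) = lin1 c1 := by rw [← heq]
        rw [this, hlin1c1, ← heq]
        rw [show (c1 - c1)/ρ2 = 0 by simp]
        rw [gg_zero]
        ring
      · rw [if_neg (show ¬((x:ℝ) ≤ u) by rw [hc1def] at hlt; push_neg; linarith),
          if_neg (not_le.2 hlt), if_pos hx2]
        rw [hgad]
    exact le_antisymm (mdim_le_one _) (one_le_mdim hc10 hρ20 hc2r hwinG)

end MdimProof


end MdimAux

/-- **Proposition 5.4**: the set of continuous self-maps of `[0,1]` with upper metric mean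
dimension equal to `1` is dense in `C([0,1])` with the uniform topology. -/
theorem dense_mdim_eq_one :
    Dense {F : C((Set.Icc (0:ℝ) 1), (Set.Icc (0:ℝ) 1)) | mdim (⇑F) = 1} := by
  rw [Metric.dense_iff]
  intro F δ hδ
  obtain ⟨G, hdist, hmdim⟩ := MdimProof.construct F (show (0:ℝ) < δ/2 by linarith)
  refine ⟨G, ?_, hmdim⟩
  rw [Metric.mem_ball, dist_comm]
  linarith
end

section
/- Let (X,d) be a compact metric space and T:X→X a continuous map. Then the upper metric mean dimension is bounded by the upper box dimension of the space: mdim(X,d,T) ≤ dim_B(X,d). -/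
open Filter Set Metric Function
open scoped ENNReal NNReal

section AuxProof

open Filter

variable {X : Type u} [MetricSpace X]

lemma sepSet_zero_mem (r : ℝ) :
    (0:ℕ) ∈ {m | ∃ E : Finset X, (∀ x ∈ E, ∀ y ∈ E, x ≠ y → r < dist x y) ∧ E.card = m} :=
  ⟨∅, by simp, rfl⟩

lemma sepSet_bddAbove [CompactSpace X] {r : ℝ} (hr : 0 < r) :
    BddAbove {m | ∃ E : Finset X, (∀ x ∈ E, ∀ y ∈ E, x ≠ y → r < dist x y) ∧ E.card = m} := by
  classical
  obtain ⟨t, -, htf, htc⟩ :=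
    (isCompact_univ (X := X)).finite_cover_balls (show (0:ℝ) < r/2 by linarith)
  refine ⟨htf.toFinset.card, ?_⟩
  rintro m ⟨E, hE, rfl⟩
  have hmap : ∀ x ∈ E, ∃ c ∈ htf.toFinset, x ∈ Metric.ball c (r/2) := by
    intro x _
    have hx := htc (Set.mem_univ x)
    simp only [Set.mem_iUnion, exists_prop] at hx
    obtain ⟨c, hc, hxc⟩ := hx
    exact ⟨c, htf.mem_toFinset.2 hc, hxc⟩
  choose! f hf1 hf2 using hmap
  refine Finset.card_le_card_of_injOn f (fun x hx => hf1 x hx) ?_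
  intro x hx y hy hxy
  by_contra hne
  have h1 := hf2 x hx
  have h2 := hf2 y hy
  rw [Metric.mem_ball] at h1 h2
  have : dist x y < r := by
    calc dist x y ≤ dist x (f x) + dist (f y) y := by
          rw [hxy]; exact dist_triangle _ _ _
      _ < r/2 + r/2 := by rw [dist_comm (f y) y]; linarith
      _ = r := by ring
  exact absurd (hE x hx y hy hne) (not_lt.2 this.le)

lemma exists_maximal_sep [CompactSpace X] {r : ℝ} (hr : 0 < r) :
    ∃ F : Finset X, (∀ x ∈ F, ∀ y ∈ F, x ≠ y → r < dist x y) ∧ F.card = sepNum X r ∧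
      ∀ x : X, ∃ f ∈ F, dist x f ≤ r := by
  classical
  have hmem := Nat.sSup_mem ⟨0, sepSet_zero_mem (X := X) r⟩ (sepSet_bddAbove hr)
  obtain ⟨F, hF, hcard⟩ := hmem
  refine ⟨F, hF, hcard, ?_⟩
  intro x
  by_contra h
  push_neg at h
  have hxF : x ∉ F := by
    intro hx
    have := h x hx
    simp at this
    linarith
  have hins : (insert x F).card ∈
      {m | ∃ E : Finset X, (∀ a ∈ E, ∀ b ∈ E, a ≠ b → r < dist a b) ∧ E.card = m} := by
    refine ⟨insert x F, ?_, rfl⟩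
    intro a ha b hb hab
    rcases Finset.mem_insert.1 ha with ha' | ha'
    · rcases Finset.mem_insert.1 hb with hb' | hb'
      · exact absurd (ha'.trans hb'.symm) hab
      · rw [ha']; exact h b hb'
    · rcases Finset.mem_insert.1 hb with hb' | hb'
      · rw [hb', dist_comm]; exact h a ha'
      · exact hF a ha' b hb' hab
  have hle := le_csSup (sepSet_bddAbove hr) hins
  rw [Finset.card_insert_of_notMem hxF] at hle
  have : sSup {m | ∃ E : Finset X, (∀ a ∈ E, ∀ b ∈ E, a ≠ b → r < dist a b) ∧ E.card = m}
      = F.card := hcard.symm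
  omega

lemma dynSepNum_le_pow [CompactSpace X] (T : X → X) {ε : ℝ} (hε : 0 < ε) (n : ℕ) :
    dynSepNum T n ε ≤ sepNum X (ε/2) ^ n := by
  classical
  obtain ⟨F, hFsep, hFcard, hFcov⟩ := exists_maximal_sep (X := X) (show (0:ℝ) < ε/2 by linarith)
  rw [dynSepNum]
  refine csSup_le ⟨0, ⟨∅, by simp, rfl⟩⟩ ?_
  rintro m ⟨E, hE, rfl⟩
  have hcov : ∀ (x : X) (k : Fin n), ∃ f ∈ F, dist (T^[(k:ℕ)] x) f ≤ ε/2 := fun x k =>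
    hFcov (T^[(k:ℕ)] x)
  choose g hg1 hg2 using hcov
  have hinj : Set.InjOn g (E : Set X) := by
    intro x hx y hy hxy
    by_contra hne
    have hsep := hE x hx y hy hne
    have hle : dynDist T n x y ≤ ε := by
      rw [dynDist]
      have : ((Finset.range n).sup fun k => nndist (T^[k] x) (T^[k] y)) ≤ ε.toNNReal := by
        refine Finset.sup_le ?_
        intro k hk
        rw [Finset.mem_range] at hk
        rw [← NNReal.coe_le_coe, coe_nndist, Real.coe_toNNReal _ hε.le]
        calc dist (T^[k] x) (T^[k] y)
            ≤ dist (T^[k] x) (g x ⟨k, hk⟩) + dist (g y ⟨k, hk⟩) (T^[k] y) := by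
              have := congrFun hxy (⟨k, hk⟩ : Fin n)
              rw [this]; exact dist_triangle _ _ _
          _ ≤ ε/2 + ε/2 := by
              have h1 := hg2 x ⟨k, hk⟩
              have h2 := hg2 y ⟨k, hk⟩
              rw [dist_comm (g y ⟨k, hk⟩)]
              simp only at h1 h2 ⊢
              linarith
          _ = ε := by ring
      calc (((Finset.range n).sup fun k => nndist (T^[k] x) (T^[k] y) : ℝ≥0) : ℝ)
          ≤ (ε.toNNReal : ℝ) := NNReal.coe_le_coe.2 this
        _ = ε := Real.coe_toNNReal _ hε.le
    exact absurd hsep (not_lt.2 hle)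
  have hmaps : ∀ x ∈ E, g x ∈ Fintype.piFinset (fun _ : Fin n => F) := by
    intro x _
    rw [Fintype.mem_piFinset]
    exact fun k => hg1 x k
  have hcard := Finset.card_le_card_of_injOn g hmaps hinj
  calc E.card ≤ (Fintype.piFinset (fun _ : Fin n => F)).card := hcard
    _ = F.card ^ n := by
        rw [Fintype.card_piFinset]
        simp [Finset.prod_const]
    _ = sepNum X (ε/2) ^ n := by rw [hFcard]

lemma dynS_le_log [CompactSpace X] (T : X → X) {ε : ℝ} (hε : 0 < ε) :
    dynS T ε ≤ ENNReal.ofReal (Real.log (sepNum X (ε/2))) := by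
  refine limsup_le_of_le (by isBoundedDefault) ?_
  filter_upwards [eventually_ge_atTop 1] with n hn
  set M := sepNum X (ε/2) with hM
  rcases Nat.eq_zero_or_pos (dynSepNum T n ε) with h0 | h1
  · simp [h0]
  · have hle : (dynSepNum T n ε : ℝ) ≤ (M : ℝ) ^ n := by
      exact_mod_cast dynSepNum_le_pow T hε n
    have hlog : Real.log (dynSepNum T n ε) ≤ (n : ℝ) * Real.log M := by
      calc Real.log (dynSepNum T n ε) ≤ Real.log ((M : ℝ) ^ n) :=
            Real.log_le_log (by exact_mod_cast h1) hle
        _ = (n : ℝ) * Real.log M := Real.log_pow (M:ℝ) n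
    have hn0 : ((n : ℝ≥0∞)) ≠ 0 := by
      exact_mod_cast (Nat.one_le_iff_ne_zero.1 hn)
    have hnt : ((n : ℝ≥0∞)) ≠ ⊤ := ENNReal.natCast_ne_top n
    calc ENNReal.ofReal (Real.log (dynSepNum T n ε)) / (n : ℝ≥0∞)
        ≤ ENNReal.ofReal ((n : ℝ) * Real.log M) / (n : ℝ≥0∞) :=
          ENNReal.div_le_div (ENNReal.ofReal_le_ofReal hlog) le_rfl
      _ = (n : ℝ≥0∞) * ENNReal.ofReal (Real.log M) / (n : ℝ≥0∞) := by
          rw [ENNReal.ofReal_mul (by positivity), ENNReal.ofReal_natCast]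
      _ = ENNReal.ofReal (Real.log M) * ((n : ℝ≥0∞) / (n : ℝ≥0∞)) := by
          rw [mul_comm, mul_div_assoc]
      _ = ENNReal.ofReal (Real.log M) := by
          rw [ENNReal.div_self hn0 hnt, mul_one]

end AuxProof

/-- **Remark 5.1**: for a continuous map of a compact metric space, the upper metric mean
dimension is bounded above by the upper box dimension of the space. -/
theorem mdim_le_upperBoxDim
    {X : Type u} [MetricSpace X] [CompactSpace X] (T : X → X) (hT : Continuous T) :
    mdim T ≤ upperBoxDim X := by
  classical
  set l : Filter ℝ := nhdsWithin (0:ℝ) (Set.Ioi 0) with hl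
  set L : ℝ → ℝ≥0∞ := fun r => ENNReal.ofReal (Real.log (sepNum X r)) with hL
  set u : ℝ → ℝ≥0∞ := fun r => L r / ENNReal.ofReal |Real.log r| with hu
  -- map of the filter under halving
  have hmap : Filter.map (fun ε : ℝ => ε / 2) l ≤ l := by
    rw [Filter.map_le_iff_le_comap, ← Filter.tendsto_iff_comap]
    apply tendsto_nhdsWithin_of_tendsto_nhds_of_eventually_within
    · have : Filter.Tendsto (fun ε : ℝ => ε / 2) (nhds 0) (nhds (0/2)) :=
        (continuous_id.div_const 2).tendsto 0
      simpa using this.mono_left nhdsWithin_le_nhds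
    · filter_upwards [self_mem_nhdsWithin] with ε (hε : ε ∈ Set.Ioi 0)
      exact Set.mem_Ioi.2 (by simpa using half_pos (Set.mem_Ioi.1 hε))
  have hg : Filter.limsup (fun ε => u (ε/2)) l ≤ upperBoxDim X := by
    have heq : Filter.limsup (fun ε => u (ε/2)) l
        = Filter.limsup u (Filter.map (fun ε : ℝ => ε/2) l) := rfl
    rw [heq]
    exact Filter.limsup_le_limsup_of_le hmap
  -- step 1 : bound mdim by the halved separation numbers
  have h1 : mdim T ≤ Filter.limsup (fun ε => L (ε/2) / ENNReal.ofReal |Real.log ε|) l := by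
    refine Filter.limsup_le_limsup ?_ (by isBoundedDefault) (by isBoundedDefault)
    filter_upwards [self_mem_nhdsWithin] with ε (hε : ε ∈ Set.Ioi 0)
    exact ENNReal.div_le_div (dynS_le_log T hε) le_rfl
  refine le_trans h1 ?_
  -- step 2 : compare with the box dimension, up to a factor c > 1
  refine ENNReal.le_of_forall_lt_one_mul_le ?_
  intro a ha
  rcases eq_or_ne a 0 with rfl | ha0
  · simp
  have hat : a ≠ ⊤ := ne_top_of_lt (lt_of_lt_of_le ha le_top)
  set c : ℝ≥0∞ := a⁻¹ with hc
  have hc1 : 1 < c := ENNReal.one_lt_inv.2 ha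
  have hcne : c ≠ ⊤ := by
    simp only [hc, ENNReal.inv_ne_top]
    exact ha0
  have hc0 : c ≠ 0 := by
    simp only [hc, ne_eq, ENNReal.inv_eq_zero]
    exact hat
  set c' : ℝ := c.toReal with hc'
  have hc'1 : 1 < c' := by
    rw [hc', hc, ENNReal.toReal_inv]
    have h0 : 0 < a.toReal := ENNReal.toReal_pos ha0 hat
    have h1 : a.toReal < 1 := by
      have := (ENNReal.toReal_lt_toReal hat ENNReal.one_ne_top).2 ha
      simpa using this
    exact (one_lt_inv₀ h0).2 h1
  -- the eventual pointwise bound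
  have hev : ∀ᶠ ε in l, L (ε/2) / ENNReal.ofReal |Real.log ε| ≤ c * u (ε/2) := by
    have e2 : ∀ᶠ ε in l, ε < 1/2 :=
      (gt_mem_nhds (show (0:ℝ) < 1/2 by norm_num)).filter_mono nhdsWithin_le_nhds
    have e3 : ∀ᶠ ε in l, Real.log ε ≤ -(Real.log 2 / (c' - 1)) :=
      Real.tendsto_log_nhdsGT_zero.eventually (Filter.eventually_le_atBot _)
    filter_upwards [self_mem_nhdsWithin, e2, e3] with ε hε hε2 hε3
    have hε0 : (0:ℝ) < ε := hε
    have hlogneg : Real.log ε < 0 := Real.log_neg hε0 (by linarith)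
    have habs : |Real.log ε| = -Real.log ε := abs_of_neg hlogneg
    have hlog2 : (0:ℝ) < Real.log 2 := Real.log_pos (by norm_num)
    have hhalf : Real.log (ε/2) = Real.log ε - Real.log 2 :=
      Real.log_div hε0.ne' (by norm_num)
    have habs2 : |Real.log (ε/2)| = -Real.log ε + Real.log 2 := by
      rw [hhalf, abs_of_neg (by linarith)]; ring
    have h4 : Real.log 2 ≤ (-Real.log ε) * (c' - 1) :=
      (div_le_iff₀ (by linarith)).1 (by linarith)
    have key : -Real.log ε + Real.log 2 ≤ c' * |Real.log ε| := by
      rw [habs]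
      nlinarith
    have hb' : ENNReal.ofReal |Real.log (ε/2)| ≤ c * ENNReal.ofReal |Real.log ε| := by
      calc ENNReal.ofReal |Real.log (ε/2)| ≤ ENNReal.ofReal (c' * |Real.log ε|) := by
            apply ENNReal.ofReal_le_ofReal
            rw [habs2]; exact key
        _ = ENNReal.ofReal c' * ENNReal.ofReal |Real.log ε| :=
            ENNReal.ofReal_mul (by linarith)
        _ = c * ENNReal.ofReal |Real.log ε| := by rw [hc', ENNReal.ofReal_toReal hcne]
    calc L (ε/2) / ENNReal.ofReal |Real.log ε|
        = c * L (ε/2) / (c * ENNReal.ofReal |Real.log ε|) :=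
          (ENNReal.mul_div_mul_left _ _ hc0 hcne).symm
      _ ≤ c * L (ε/2) / ENNReal.ofReal |Real.log (ε/2)| := ENNReal.div_le_div le_rfl hb'
      _ = c * (L (ε/2) / ENNReal.ofReal |Real.log (ε/2)|) := mul_div_assoc _ _ _
      _ = c * u (ε/2) := rfl
  calc a * Filter.limsup (fun ε => L (ε/2) / ENNReal.ofReal |Real.log ε|) l
      ≤ a * Filter.limsup (fun ε => c * u (ε/2)) l := by
        exact mul_le_mul_right
          (Filter.limsup_le_limsup hev (by isBoundedDefault) (by isBoundedDefault)) a
    _ = a * (c * Filter.limsup (fun ε => u (ε/2)) l) := by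
        rw [ENNReal.limsup_const_mul_of_ne_top hcne]
    _ = (a * c) * Filter.limsup (fun ε => u (ε/2)) l := (mul_assoc _ _ _).symm
    _ = Filter.limsup (fun ε => u (ε/2)) l := by
        rw [hc, ENNReal.mul_inv_cancel ha0 hat, one_mul]
    _ ≤ upperBoxDim X := hg
end
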